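/- arXiv:2405.17254 — 5 statements merged into one kernel-verified Lean document; each statement's English description precedes it below -/
import Mathlib

section
/- Under Assumptions 1, 2, and 4, letting φ̂_{s,1} = w̃_s[(ITT̂_s − ITT̂)² − V̂_rob(ITT̂_s)], the variance estimator V̂_{σ²[ITT]} = (1/S) Σ_{s=1}^S (φ̂_{s,1} − (1/S)Σ_{s'} φ̂_{s',1})² converges in probability to v̄ = lim_{S→∞}(1/S)Σ_s E(φ²_{s,1}) − (lim_{S→∞}(1/S)Σ_s E(φ_{s,1}))², and v̄ ≥ V_{σ²[ITT]} = lim_{S→∞}(1/S)Σ_s Var(φ_{s,1}); hence V̂_{σ²[ITT]} is a conservative estimator of the asymptotic variance of the Empirical-Bayes estimator. -/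
open MeasureTheory ProbabilityTheory Filter Finset
open scoped ENNReal NNReal

namespace MultiSite

variable {Ω : Type*} [MeasurableSpace Ω]

/-- Observed variable, given assignment indicator `Z` and potential versions `X0, X1`. -/
noncomputable def obs (Z X0 X1 : ℕ → ℕ → Ω → ℝ) (s i : ℕ) (ω : Ω) : ℝ :=
  Z s i ω * X1 s i ω + (1 - Z s i ω) * X0 s i ω

/-- Sample mean of `X` among treated units of site `s`. -/
noncomputable def mean1 (n n1 : ℕ → ℕ) (Z X : ℕ → ℕ → Ω → ℝ) (s : ℕ) (ω : Ω) : ℝ :=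
  (∑ i ∈ Finset.range (n s), Z s i ω * X s i ω) / (n1 s : ℝ)

/-- Sample mean of `X` among untreated units of site `s`. -/
noncomputable def mean0 (n n1 : ℕ → ℕ) (Z X : ℕ → ℕ → Ω → ℝ) (s : ℕ) (ω : Ω) : ℝ :=
  (∑ i ∈ Finset.range (n s), (1 - Z s i ω) * X s i ω) / ((n s - n1 s : ℕ) : ℝ)

/-- Degrees-of-freedom-adjusted sample variance of `X` among treated units of site `s`. -/
noncomputable def svar1 (n n1 : ℕ → ℕ) (Z X : ℕ → ℕ → Ω → ℝ) (s : ℕ) (ω : Ω) : ℝ :=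
  (∑ i ∈ Finset.range (n s), Z s i ω * (X s i ω - mean1 n n1 Z X s ω) ^ 2) /
    ((n1 s - 1 : ℕ) : ℝ)

/-- Degrees-of-freedom-adjusted sample variance of `X` among untreated units of site `s`. -/
noncomputable def svar0 (n n1 : ℕ → ℕ) (Z X : ℕ → ℕ → Ω → ℝ) (s : ℕ) (ω : Ω) : ℝ :=
  (∑ i ∈ Finset.range (n s), (1 - Z s i ω) * (X s i ω - mean0 n n1 Z X s ω) ^ 2) /
    ((n s - n1 s - 1 : ℕ) : ℝ)

/-- Degrees-of-freedom-adjusted sample covariance of `Q` and `X` among treated units. -/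
noncomputable def scov1 (n n1 : ℕ → ℕ) (Z Q X : ℕ → ℕ → Ω → ℝ) (s : ℕ) (ω : Ω) : ℝ :=
  (∑ i ∈ Finset.range (n s),
      Z s i ω * ((Q s i ω - mean1 n n1 Z Q s ω) * (X s i ω - mean1 n n1 Z X s ω))) /
    ((n1 s - 1 : ℕ) : ℝ)

/-- Degrees-of-freedom-adjusted sample covariance of `Q` and `X` among untreated units. -/
noncomputable def scov0 (n n1 : ℕ → ℕ) (Z Q X : ℕ → ℕ → Ω → ℝ) (s : ℕ) (ω : Ω) : ℝ :=
  (∑ i ∈ Finset.range (n s),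
      (1 - Z s i ω) * ((Q s i ω - mean0 n n1 Z Q s ω) * (X s i ω - mean0 n n1 Z X s ω))) /
    ((n s - n1 s - 1 : ℕ) : ℝ)

/-- Treated-minus-untreated contrast of sample means of the observed variable `X` in site `s`. -/
noncomputable def itthat (n n1 : ℕ → ℕ) (Z X : ℕ → ℕ → Ω → ℝ) (s : ℕ) (ω : Ω) : ℝ :=
  mean1 n n1 Z X s ω - mean0 n n1 Z X s ω

/-- Robust (Eicker-Huber-White) variance estimator of `itthat` in site `s`. -/
noncomputable def vrob (n n1 : ℕ → ℕ) (Z X : ℕ → ℕ → Ω → ℝ) (s : ℕ) (ω : Ω) : ℝ :=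
  svar1 n n1 Z X s ω / (n1 s : ℝ) + svar0 n n1 Z X s ω / ((n s - n1 s : ℕ) : ℝ)

/-- Population average effect in site `s` (unit 0 has the common within-site distribution). -/
noncomputable def popEff (P : Measure Ω) (X0 X1 : ℕ → ℕ → Ω → ℝ) (s : ℕ) : ℝ :=
  ∫ ω, (X1 s 0 ω - X0 s 0 ω) ∂P

/-- Population covariance of two real random variables. -/
noncomputable def covar (P : Measure Ω) (X Y : Ω → ℝ) : ℝ :=
  ∫ ω, (X ω - ∫ ω', X ω' ∂P) * (Y ω - ∫ ω', Y ω' ∂P) ∂P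

/-- Assumption 1: within each site `s`, the assignment vector is uniformly distributed over
all 0/1 vectors with exactly `n1 s` ones, with `2 ≤ n1 s ≤ n s - 2`. -/
def Assumption1 (P : Measure Ω) (n n1 : ℕ → ℕ) (Z : ℕ → ℕ → Ω → ℝ) : Prop :=
  ∀ s : ℕ, 2 ≤ n1 s ∧ n1 s + 2 ≤ n s ∧
    ∀ z : ℕ → ℝ, (∀ i ∈ Finset.range (n s), z i = 0 ∨ z i = 1) →
      (∑ i ∈ Finset.range (n s), z i) = (n1 s : ℝ) →
      P {ω | ∀ i ∈ Finset.range (n s), Z s i ω = z i} = (((n s).choose (n1 s) : ℝ≥0∞))⁻¹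

/-- Assumption 2: within each site the unit-level vectors `W s i` of potential variables are
i.i.d. across units and independent of the site's assignment vector, and the site-level
vectors (potential variables, assignments) are mutually independent across sites. -/
def Assumption2 (P : Measure Ω) {β : Type*} [MeasurableSpace β]
    (W : ℕ → ℕ → Ω → β) (Z : ℕ → ℕ → Ω → ℝ) : Prop :=
  (∀ s : ℕ, iIndepFun (W s) P) ∧
  (∀ s i j, IdentDistrib (W s i) (W s j) P P) ∧
  (∀ s : ℕ, IndepFun (fun ω i => W s i ω) (fun ω i => Z s i ω) P) ∧
  iIndepFun (fun s ω => ((fun i => W s i ω), (fun i => Z s i ω))) P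

/-- The Lyapunov central-limit condition for a (triangular array of) independent random
variables `φ S s`. -/
def Lyapunov (P : Measure Ω) (φ : ℕ → ℕ → Ω → ℝ) : Prop :=
  ∃ δ : ℝ, 0 < δ ∧
    Tendsto
      (fun S : ℕ =>
        (∑ s ∈ Finset.range S, ∫ ω, |φ S s ω - ∫ ω', φ S s ω' ∂P| ^ (2 + δ) ∂P) /
          (∑ s ∈ Finset.range S, variance (φ S s) P) ^ (1 + δ / 2))
      atTop (nhds 0)

/-- Convergence in distribution of real random variables to a limiting law `μ`, stated as
weak convergence tested against bounded continuous functions. -/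
def TendstoInDistribution (P : Measure Ω) (f : ℕ → Ω → ℝ) (μ : Measure ℝ) : Prop :=
  ∀ g : BoundedContinuousFunction ℝ ℝ,
    Tendsto (fun S => ∫ ω, g (f S ω) ∂P) atTop (nhds (∫ x, g x ∂μ))



set_option linter.unusedSectionVars false

variable {P : Measure Ω}

lemma tim_iff_of_abs_eq {f g : ℕ → Ω → ℝ} {a b : ℝ}
    (h : ∀ S ω, |f S ω - a| = |g S ω - b|) :
    TendstoInMeasure P f atTop (fun _ => a) ↔ TendstoInMeasure P g atTop (fun _ => b) := by
  have hset : ∀ (ε : ℝ) S, {ω | ε ≤ dist (f S ω) a} = {ω | ε ≤ dist (g S ω) b} := by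
    intro ε S; ext ω; simp only [Set.mem_setOf_eq, Real.dist_eq, h S ω]
  rw [tendstoInMeasure_iff_dist, tendstoInMeasure_iff_dist]
  constructor <;> intro H ε hε <;> have := H ε hε
  · simpa only [hset ε] using this
  · simpa only [← hset ε] using this

lemma tim_add {f g : ℕ → Ω → ℝ} {a b : ℝ}
    (hf : TendstoInMeasure P f atTop (fun _ => a))
    (hg : TendstoInMeasure P g atTop (fun _ => b)) :
    TendstoInMeasure P (fun S ω => f S ω + g S ω) atTop (fun _ => a + b) := by
  rw [tendstoInMeasure_iff_dist] at hf hg ⊢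
  intro ε hε
  have hf2 := hf (ε/2) (by linarith)
  have hg2 := hg (ε/2) (by linarith)
  have hb : ∀ S, P {ω | ε ≤ dist (f S ω + g S ω) (a + b)} ≤
      P {ω | ε/2 ≤ dist (f S ω) a} + P {ω | ε/2 ≤ dist (g S ω) b} := by
    intro S
    refine le_trans (measure_mono ?_) (measure_union_le _ _)
    intro ω hω
    simp only [Set.mem_setOf_eq, Real.dist_eq, Set.mem_union] at hω ⊢
    by_contra hcon
    push_neg at hcon
    have h1 : |f S ω - a| < ε/2 := hcon.1
    have h2 : |g S ω - b| < ε/2 := hcon.2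
    have : |f S ω + g S ω - (a + b)| < ε := by
      calc |f S ω + g S ω - (a + b)| = |(f S ω - a) + (g S ω - b)| := by ring_nf
        _ ≤ |f S ω - a| + |g S ω - b| := abs_add_le _ _
        _ < ε := by linarith
    exact absurd hω (not_le_of_gt this)
  refine tendsto_of_tendsto_of_tendsto_of_le_of_le' tendsto_const_nhds ?_
    (Eventually.of_forall fun S => zero_le) (Eventually.of_forall hb)
  simpa using Tendsto.add hf2 hg2

lemma tim_dom {f g : ℕ → Ω → ℝ} {M : ℝ} (hM : 0 < M)
    (h : ∀ S, ∀ᵐ ω ∂P, |g S ω| ≤ M * |f S ω|)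
    (hf : TendstoInMeasure P f atTop (fun _ => (0:ℝ))) :
    TendstoInMeasure P g atTop (fun _ => (0:ℝ)) := by
  rw [tendstoInMeasure_iff_dist] at hf ⊢
  intro ε hε
  have hf2 := hf (ε/M) (by positivity)
  have hb : ∀ S, P {ω | ε ≤ dist (g S ω) 0} ≤
      P {ω | ε/M ≤ dist (f S ω) 0} + P {ω | ¬ (|g S ω| ≤ M * |f S ω|)} := by
    intro S
    refine le_trans (measure_mono ?_) (measure_union_le _ _)
    intro ω hω
    simp only [Set.mem_setOf_eq, Real.dist_eq, sub_zero, Set.mem_union] at hω ⊢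
    by_cases hc : |g S ω| ≤ M * |f S ω|
    · left
      rw [div_le_iff₀ hM, mul_comm]
      linarith
    · right; exact hc
  have hnull : ∀ S, P {ω | ¬ (|g S ω| ≤ M * |f S ω|)} = 0 := fun S => (h S)
  have hb' : ∀ S, P {ω | ε ≤ dist (g S ω) 0} ≤ P {ω | ε/M ≤ dist (f S ω) 0} := by
    intro S
    calc P {ω | ε ≤ dist (g S ω) 0} ≤
        P {ω | ε/M ≤ dist (f S ω) 0} + P {ω | ¬ (|g S ω| ≤ M * |f S ω|)} := hb S
      _ = P {ω | ε/M ≤ dist (f S ω) 0} := by rw [hnull S, add_zero]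
  exact tendsto_of_tendsto_of_tendsto_of_le_of_le' tendsto_const_nhds hf2
    (Eventually.of_forall fun S => zero_le) (Eventually.of_forall hb')

/-- Weak law of large numbers for a rowwise pairwise-independent, uniformly a.e.-bounded
triangular array, with convergent row means. -/
lemma wlln [IsProbabilityMeasure P] (X : ℕ → ℕ → Ω → ℝ) (K : ℝ)
    (hm : ∀ S s, AEStronglyMeasurable (X S s) P)
    (hbd : ∀ S s, ∀ᵐ ω ∂P, |X S s ω| ≤ K)
    (hind : ∀ S, Set.Pairwise ↑(Finset.range S) (fun i j => IndepFun (X S i) (X S j) P))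
    {ℓ : ℝ}
    (hmean : Tendsto (fun S : ℕ => (∑ s ∈ Finset.range S, ∫ ω, X S s ω ∂P) / (S : ℝ))
      atTop (nhds ℓ)) :
    TendstoInMeasure P (fun S ω => (∑ s ∈ Finset.range S, X S s ω) / (S : ℝ)) atTop
      (fun _ => ℓ) := by
  have hK0 : 0 ≤ K := by
    obtain ⟨ω, hω⟩ := (hbd 0 0).exists
    exact le_trans (abs_nonneg _) hω
  have hL2 : ∀ S s, MemLp (X S s) 2 P := fun S s =>
    (memLp_top_of_bound (hm S s) K (by simpa [Real.norm_eq_abs] using hbd S s)).mono_exponent le_top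
  have hvar : ∀ S s, variance (X S s) P ≤ K ^ 2 := by
    intro S s
    refine le_trans (variance_le_expectation_sq (hm S s)) ?_
    have h1 : ∫ ω, ((X S s) ^ 2) ω ∂P ≤ ∫ _ω, K ^ 2 ∂P := by
      refine integral_mono_ae ?_ (integrable_const _) ?_
      · exact (hL2 S s).integrable_sq
      · filter_upwards [hbd S s] with ω hω
        simpa [Pi.pow_apply, sq_abs] using pow_le_pow_left₀ (abs_nonneg _) hω 2
    simpa using h1
  rw [tendstoInMeasure_iff_dist]
  intro ε hε
  -- mean sequence
  set μs : ℕ → ℝ := fun S => (∑ s ∈ Finset.range S, ∫ ω, X S s ω ∂P) / (S : ℝ) with hμs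
  have hev : ∀ᶠ S in atTop, |μs S - ℓ| < ε/2 := by
    have := hmean.sub (tendsto_const_nhds (x := ℓ))
    rw [sub_self] at this
    have h2 := Metric.tendsto_nhds.mp this (ε/2) (by linarith)
    filter_upwards [h2] with S hS
    simpa [Real.dist_eq] using hS
  have hbound : ∀ᶠ S in atTop, P {ω | ε ≤ dist ((∑ s ∈ Finset.range S, X S s ω) / (S : ℝ)) ℓ}
      ≤ ENNReal.ofReal ((4 * K ^ 2 / ε ^ 2) / (S : ℝ)) := by
    filter_upwards [hev, eventually_ge_atTop 1] with S hS hS1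
    have hSpos : (0:ℝ) < S := by exact_mod_cast hS1
    set T : Ω → ℝ := fun ω => ∑ s ∈ Finset.range S, X S s ω with hT
    have hTmem : MemLp T 2 P := by
      have h := memLp_finsetSum' (Finset.range S) (fun s (_ : s ∈ Finset.range S) => hL2 S s)
      have he : (∑ s ∈ Finset.range S, X S s) = T := by
        funext ω; simp [hT, Finset.sum_apply]
      rwa [he] at h
    have hTint : ∫ ω, T ω ∂P = ∑ s ∈ Finset.range S, ∫ ω, X S s ω ∂P :=
      integral_finset_sum _ (fun s _ => (hL2 S s).integrable one_le_two)
    have hc : (0:ℝ) < (S:ℝ) * ε / 2 := by positivity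
    have hcheb := meas_ge_le_variance_div_sq (μ := P) hTmem hc
    have hsub : {ω | ε ≤ dist ((∑ s ∈ Finset.range S, X S s ω) / (S : ℝ)) ℓ}
        ⊆ {ω | (S:ℝ) * ε / 2 ≤ |T ω - ∫ x, T x ∂P|} := by
      intro ω hω
      simp only [Set.mem_setOf_eq, Real.dist_eq] at hω ⊢
      have h1 : |T ω / S - μs S| ≥ ε/2 := by
        have habs : |μs S - ℓ| < ε/2 := hS
        have htri : |T ω / S - ℓ| ≤ |T ω / S - μs S| + |μs S - ℓ| := abs_sub_le _ _ _
        have : ε ≤ |T ω / S - ℓ| := hω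
        linarith
      have h2 : T ω / S - μs S = (T ω - ∫ x, T x ∂P) / S := by
        rw [hTint, hμs]; ring
      rw [h2, abs_div, abs_of_pos hSpos] at h1
      rw [ge_iff_le, le_div_iff₀ hSpos] at h1
      linarith
    refine le_trans (measure_mono hsub) (le_trans hcheb ?_)
    apply ENNReal.ofReal_le_ofReal
    have hvsum : variance T P ≤ (S:ℝ) * K ^ 2 := by
      have := IndepFun.variance_sum (μ := P) (X := X S) (s := Finset.range S)
        (fun s _ => hL2 S s) (hind S)
      have he : (∑ s ∈ Finset.range S, X S s) = T := by
        funext ω; simp [hT, Finset.sum_apply]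
      have hsum : variance T P = ∑ s ∈ Finset.range S, variance (X S s) P := by
        rw [← he]; exact this
      rw [hsum]
      calc ∑ s ∈ Finset.range S, variance (X S s) P ≤ (Finset.range S).card • (K^2) :=
            Finset.sum_le_card_nsmul _ _ _ (fun s _ => hvar S s)
        _ = (S:ℝ) * K^2 := by simp [nsmul_eq_mul]
    have hc2 : (0:ℝ) < ((S:ℝ) * ε / 2) ^ 2 := by positivity
    calc variance T P / ((S:ℝ) * ε / 2) ^ 2 ≤ ((S:ℝ) * K^2) / ((S:ℝ) * ε / 2) ^ 2 :=
          (div_le_div_iff_of_pos_right hc2).mpr hvsum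
      _ = (4 * K ^ 2 / ε ^ 2) / (S : ℝ) := by field_simp; ring
  refine tendsto_of_tendsto_of_tendsto_of_le_of_le' tendsto_const_nhds ?_
    (Eventually.of_forall fun S => zero_le) hbound
  have h0 : Tendsto (fun S : ℕ => (4 * K ^ 2 / ε ^ 2) / (S : ℝ)) atTop (nhds 0) :=
    tendsto_const_div_atTop_nhds_zero_nat _
  simpa using ENNReal.tendsto_ofReal h0

lemma sumZ_ae [IsProbabilityMeasure P] (n n1 : ℕ → ℕ) (Z : ℕ → ℕ → Ω → ℝ)
    (hmZ : ∀ s i, Measurable (Z s i))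
    (hA1 : Assumption1 P n n1 Z) (s : ℕ) :
    ∀ᵐ ω ∂P, ∑ i ∈ Finset.range (n s), Z s i ω = (n1 s : ℝ) := by
  obtain ⟨hk2, hkN, hP⟩ := hA1 s
  set N := n s with hN
  set k := n1 s with hk
  have hkleN : k ≤ N := by omega
  set A : Set Ω := {ω | ∑ i ∈ Finset.range N, Z s i ω = (k:ℝ)} with hA
  have hsumMeas : Measurable fun ω => ∑ i ∈ Finset.range N, Z s i ω :=
    Finset.measurable_sum _ (fun i _ => hmZ s i)
  have hAmeas : MeasurableSet A := measurableSet_eq_fun hsumMeas measurable_const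
  set E : Finset ℕ → Set Ω :=
    fun t => {ω | ∀ i ∈ Finset.range N, Z s i ω = if i ∈ t then (1:ℝ) else 0} with hE
  set 𝒯 := Finset.powersetCard k (Finset.range N) with h𝒯
  have hmemT : ∀ t ∈ 𝒯, t ⊆ Finset.range N ∧ t.card = k := by
    intro t ht; exact Finset.mem_powersetCard.mp ht
  have hzsum : ∀ t ∈ 𝒯, (∑ i ∈ Finset.range N, if i ∈ t then (1:ℝ) else 0) = (k:ℝ) := by
    intro t ht
    rw [Finset.sum_ite_mem, Finset.inter_eq_right.mpr (hmemT t ht).1]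
    simp [(hmemT t ht).2]
  have hPE : ∀ t ∈ 𝒯, P (E t) = ((N.choose k : ℝ≥0∞))⁻¹ := by
    intro t ht
    exact hP _ (fun i _ => by by_cases h : i ∈ t <;> simp [h]) (hzsum t ht)
  have hEmeas : ∀ t, MeasurableSet (E t) := by
    intro t
    have : E t = ⋂ i ∈ Finset.range N, {ω | Z s i ω = if i ∈ t then (1:ℝ) else 0} := by
      ext ω; simp [hE, Set.mem_iInter]
    rw [this]
    exact MeasurableSet.biInter (Finset.range N).countable_toSet
      (fun i _ => measurableSet_eq_fun (hmZ s i) measurable_const)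
  have hdisj : (↑𝒯 : Set (Finset ℕ)).PairwiseDisjoint E := by
    intro t ht u hu htu
    have ht : t ∈ 𝒯 := ht
    have hu : u ∈ 𝒯 := hu
    rw [Function.onFun, Set.disjoint_left]
    intro ω hωt hωu
    have hne : ¬ (∀ i, i ∈ t ↔ i ∈ u) := fun h => htu (Finset.ext h)
    push_neg at hne
    obtain ⟨i, hi⟩ := hne
    have htsub := (hmemT t ht).1
    have husub := (hmemT u hu).1
    rcases hi with ⟨hit, hiu⟩ | ⟨hit, hiu⟩
    · have hiN : i ∈ Finset.range N := htsub hit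
      have h1 := hωt i hiN
      have h2 := hωu i hiN
      rw [if_pos hit] at h1; rw [if_neg hiu] at h2
      exact one_ne_zero (h1 ▸ h2 : (1:ℝ) = 0)
    · have hiN : i ∈ Finset.range N := husub hiu
      have h1 := hωt i hiN
      have h2 := hωu i hiN
      rw [if_neg hit] at h1; rw [if_pos hiu] at h2
      exact one_ne_zero (h2 ▸ h1 : (1:ℝ) = 0)
  have hchoosepos : 0 < N.choose k := Nat.choose_pos hkleN
  have hPU : P (⋃ t ∈ 𝒯, E t) = 1 := by
    rw [measure_biUnion_finset hdisj (fun t _ => hEmeas t)]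
    rw [Finset.sum_congr rfl hPE, Finset.sum_const, Finset.card_powersetCard,
      Finset.card_range]
    rw [nsmul_eq_mul]
    exact ENNReal.mul_inv_cancel (by exact_mod_cast hchoosepos.ne')
      (ENNReal.natCast_ne_top _)
  have hsubA : (⋃ t ∈ 𝒯, E t) ⊆ A := by
    intro ω hω
    simp only [Set.mem_iUnion] at hω
    obtain ⟨t, ht, hωt⟩ := hω
    have : ∑ i ∈ Finset.range N, Z s i ω
        = ∑ i ∈ Finset.range N, if i ∈ t then (1:ℝ) else 0 :=
      Finset.sum_congr rfl (fun i hi => hωt i hi)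
    exact this.trans (hzsum t ht)
  have hPA : P A = 1 := le_antisymm prob_le_one (hPU ▸ measure_mono hsubA)
  have : P Aᶜ = 0 := (prob_compl_eq_zero_iff hAmeas).mpr hPA
  rw [ae_iff]
  convert this using 2
  rfl

/-! ### Pointwise bounds -/

lemma ind_mean_bound (N m : ℕ) (hm : 0 < m) (w x : ℕ → ℝ)
    (hw : ∀ i, w i = 0 ∨ w i = 1) (hsum : ∑ i ∈ Finset.range N, w i = (m:ℝ)) {C : ℝ}
    (hC : ∀ i, |x i| ≤ C) : |(∑ i ∈ Finset.range N, w i * x i) / (m:ℝ)| ≤ C := by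
  have hC0 : 0 ≤ C := le_trans (abs_nonneg _) (hC 0)
  have hw0 : ∀ i, 0 ≤ w i := fun i => by rcases hw i with h | h <;> simp [h]
  have h1 : |∑ i ∈ Finset.range N, w i * x i| ≤ (m:ℝ) * C := by
    calc |∑ i ∈ Finset.range N, w i * x i| ≤ ∑ i ∈ Finset.range N, |w i * x i| :=
          Finset.abs_sum_le_sum_abs _ _
      _ ≤ ∑ i ∈ Finset.range N, w i * C := by
          refine Finset.sum_le_sum fun i _ => ?_
          rw [abs_mul, abs_of_nonneg (hw0 i)]
          exact mul_le_mul_of_nonneg_left (hC i) (hw0 i)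
      _ = (m:ℝ) * C := by rw [← Finset.sum_mul, hsum]
  have hmpos : (0:ℝ) < m := by exact_mod_cast hm
  rw [abs_div, abs_of_pos hmpos, div_le_iff₀ hmpos]
  linarith [h1]

lemma ind_svar_bound (N m : ℕ) (hm : 2 ≤ m) (w x : ℕ → ℝ)
    (hw : ∀ i, w i = 0 ∨ w i = 1) (hsum : ∑ i ∈ Finset.range N, w i = (m:ℝ)) {C : ℝ}
    (hC : ∀ i, |x i| ≤ C) (μ : ℝ) (hμ : |μ| ≤ C) :
    0 ≤ (∑ i ∈ Finset.range N, w i * (x i - μ)^2) / ((m - 1 : ℕ):ℝ) ∧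
    (∑ i ∈ Finset.range N, w i * (x i - μ)^2) / ((m - 1 : ℕ):ℝ) ≤ 8 * C^2 := by
  have hC0 : 0 ≤ C := le_trans (abs_nonneg _) (hC 0)
  have hw0 : ∀ i, 0 ≤ w i := fun i => by rcases hw i with h | h <;> simp [h]
  have hcast : ((m - 1 : ℕ):ℝ) = (m:ℝ) - 1 := by
    have : 1 ≤ m := by omega
    push_cast [this]; ring
  have hm1pos : (0:ℝ) < ((m - 1 : ℕ):ℝ) := by
    rw [hcast]; have : (2:ℝ) ≤ m := by exact_mod_cast hm
    linarith
  have hnum0 : 0 ≤ ∑ i ∈ Finset.range N, w i * (x i - μ)^2 :=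
    Finset.sum_nonneg fun i _ => mul_nonneg (hw0 i) (sq_nonneg _)
  have hnum : ∑ i ∈ Finset.range N, w i * (x i - μ)^2 ≤ (m:ℝ) * (4 * C^2) := by
    calc ∑ i ∈ Finset.range N, w i * (x i - μ)^2
        ≤ ∑ i ∈ Finset.range N, w i * (4 * C^2) := by
          refine Finset.sum_le_sum fun i _ => ?_
          refine mul_le_mul_of_nonneg_left ?_ (hw0 i)
          have h1 : |x i - μ| ≤ 2 * C := by
            calc |x i - μ| ≤ |x i| + |μ| := abs_sub _ _
              _ ≤ 2 * C := by linarith [hC i, hμ]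
          calc (x i - μ)^2 = |x i - μ|^2 := (sq_abs _).symm
            _ ≤ (2*C)^2 := by
                exact pow_le_pow_left₀ (abs_nonneg _) h1 2
            _ = 4 * C^2 := by ring
      _ = (m:ℝ) * (4 * C^2) := by rw [← Finset.sum_mul, hsum]
  constructor
  · exact div_nonneg hnum0 hm1pos.le
  · rw [div_le_iff₀ hm1pos, hcast]
    have hm2 : (2:ℝ) ≤ m := by exact_mod_cast hm
    nlinarith [hnum, sq_nonneg C]

/-- Pointwise bounds at a sample point where the assignment counts are as designed. -/
lemma site_bounds (n n1 : ℕ → ℕ) (Z X : ℕ → ℕ → Ω → ℝ) (s : ℕ) (ω : Ω)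
    (hk2 : 2 ≤ n1 s) (hkN : n1 s + 2 ≤ n s)
    (hz : ∀ i, Z s i ω = 0 ∨ Z s i ω = 1)
    (hs1 : ∑ i ∈ Finset.range (n s), Z s i ω = (n1 s : ℝ))
    {C : ℝ} (hX : ∀ i, |X s i ω| ≤ C) :
    |itthat n n1 Z X s ω| ≤ 2 * C ∧ 0 ≤ vrob n n1 Z X s ω ∧ vrob n n1 Z X s ω ≤ 8 * C^2 := by
  have hC0 : 0 ≤ C := le_trans (abs_nonneg _) (hX 0)
  have hkleN : n1 s ≤ n s := by omega
  have hz' : ∀ i, (1 - Z s i ω) = 0 ∨ (1 - Z s i ω) = 1 := by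
    intro i; rcases hz i with h | h <;> simp [h]
  have hs0 : ∑ i ∈ Finset.range (n s), (1 - Z s i ω) = ((n s - n1 s : ℕ) : ℝ) := by
    rw [Finset.sum_sub_distrib, hs1, Finset.sum_const, Finset.card_range,
      Nat.cast_sub hkleN]
    simp
  have hm0 : 2 ≤ n s - n1 s := by omega
  have h1 : |mean1 n n1 Z X s ω| ≤ C :=
    ind_mean_bound (n s) (n1 s) (by omega) _ _ hz hs1 hX
  have h0 : |mean0 n n1 Z X s ω| ≤ C :=
    ind_mean_bound (n s) (n s - n1 s) (by omega) _ _ hz' hs0 hX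
  have hsv1 := ind_svar_bound (n s) (n1 s) hk2 _ _ hz hs1 hX (mean1 n n1 Z X s ω) h1
  have hsv0 := ind_svar_bound (n s) (n s - n1 s) hm0 _ _ hz' hs0 hX (mean0 n n1 Z X s ω) h0
  refine ⟨?_, ?_, ?_⟩
  · rw [itthat]
    calc |mean1 n n1 Z X s ω - mean0 n n1 Z X s ω|
        ≤ |mean1 n n1 Z X s ω| + |mean0 n n1 Z X s ω| := abs_sub _ _
      _ ≤ 2 * C := by linarith
  · rw [vrob]
    have hk0 : (0:ℝ) < (n1 s : ℝ) := by exact_mod_cast (by omega : 0 < n1 s)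
    have hn0 : (0:ℝ) < ((n s - n1 s : ℕ) : ℝ) := by exact_mod_cast (by omega : 0 < n s - n1 s)
    exact add_nonneg (div_nonneg hsv1.1 hk0.le) (div_nonneg hsv0.1 hn0.le)
  · rw [vrob]
    have hk2' : (2:ℝ) ≤ (n1 s : ℝ) := by exact_mod_cast hk2
    have hn2' : (2:ℝ) ≤ ((n s - n1 s : ℕ) : ℝ) := by exact_mod_cast hm0
    have hA : svar1 n n1 Z X s ω / (n1 s : ℝ) ≤ (8 * C^2) / 2 := by
      refine div_le_div₀ (by positivity) ?_ (by norm_num) hk2'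
      exact hsv1.2
    have hB : svar0 n n1 Z X s ω / ((n s - n1 s : ℕ) : ℝ) ≤ (8 * C^2) / 2 := by
      refine div_le_div₀ (by positivity) ?_ (by norm_num) hn2'
      exact hsv0.2
    linarith [hA, hB]

/-! ### Representation of site statistics as functions of the site data -/

abbrev SiteSpace : Type := (ℕ → ℝ × ℝ) × (ℕ → ℝ)

noncomputable def fobs (p : SiteSpace) (i : ℕ) : ℝ :=
  p.2 i * (p.1 i).2 + (1 - p.2 i) * (p.1 i).1

noncomputable def fmean1 (N k : ℕ) (p : SiteSpace) : ℝ :=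
  (∑ i ∈ Finset.range N, p.2 i * fobs p i) / (k:ℝ)

noncomputable def fmean0 (N k : ℕ) (p : SiteSpace) : ℝ :=
  (∑ i ∈ Finset.range N, (1 - p.2 i) * fobs p i) / ((N - k:ℕ):ℝ)

noncomputable def fitt (N k : ℕ) (p : SiteSpace) : ℝ := fmean1 N k p - fmean0 N k p

noncomputable def fsvar1 (N k : ℕ) (p : SiteSpace) : ℝ :=
  (∑ i ∈ Finset.range N, p.2 i * (fobs p i - fmean1 N k p)^2) / ((k - 1:ℕ):ℝ)

noncomputable def fsvar0 (N k : ℕ) (p : SiteSpace) : ℝ :=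
  (∑ i ∈ Finset.range N, (1 - p.2 i) * (fobs p i - fmean0 N k p)^2) / ((N - k - 1:ℕ):ℝ)

noncomputable def fvrob (N k : ℕ) (p : SiteSpace) : ℝ :=
  fsvar1 N k p / (k:ℝ) + fsvar0 N k p / ((N - k:ℕ):ℝ)

lemma measurable_fobs (i : ℕ) : Measurable fun p : SiteSpace => fobs p i := by
  unfold fobs; fun_prop

lemma measurable_fmean1 (N k : ℕ) : Measurable (fmean1 N k) := by
  unfold fmean1
  refine Measurable.div_const (Finset.measurable_sum _ fun i _ => ?_) _
  exact Measurable.mul (by fun_prop) (measurable_fobs i)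

lemma measurable_fmean0 (N k : ℕ) : Measurable (fmean0 N k) := by
  unfold fmean0
  refine Measurable.div_const (Finset.measurable_sum _ fun i _ => ?_) _
  exact Measurable.mul (by fun_prop) (measurable_fobs i)

lemma measurable_fitt (N k : ℕ) : Measurable (fitt N k) :=
  (measurable_fmean1 N k).sub (measurable_fmean0 N k)

lemma measurable_fsvar1 (N k : ℕ) : Measurable (fsvar1 N k) := by
  unfold fsvar1
  refine Measurable.div_const (Finset.measurable_sum _ fun i _ => ?_) _
  exact Measurable.mul (by fun_prop)
    (((measurable_fobs i).sub (measurable_fmean1 N k)).pow_const 2)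

lemma measurable_fsvar0 (N k : ℕ) : Measurable (fsvar0 N k) := by
  unfold fsvar0
  refine Measurable.div_const (Finset.measurable_sum _ fun i _ => ?_) _
  exact Measurable.mul (by fun_prop)
    (((measurable_fobs i).sub (measurable_fmean0 N k)).pow_const 2)

lemma measurable_fvrob (N k : ℕ) : Measurable (fvrob N k) :=
  ((measurable_fsvar1 N k).div_const _).add ((measurable_fsvar0 N k).div_const _)

/-- The site data vector. -/
noncomputable def pairs (Y0 Y1 Z : ℕ → ℕ → Ω → ℝ) (s : ℕ) (ω : Ω) : SiteSpace :=
  ((fun i => (Y0 s i ω, Y1 s i ω)), fun i => Z s i ω)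

lemma measurable_pairs (Y0 Y1 Z : ℕ → ℕ → Ω → ℝ)
    (hmeas : ∀ s i, Measurable (Z s i) ∧ Measurable (Y0 s i) ∧ Measurable (Y1 s i)) (s : ℕ) :
    Measurable (pairs Y0 Y1 Z s) := by
  refine Measurable.prodMk ?_ ?_
  · exact measurable_pi_lambda _ fun i => ((hmeas s i).2.1).prodMk ((hmeas s i).2.2)
  · exact measurable_pi_lambda _ fun i => (hmeas s i).1

lemma itt_eq_fitt (n n1 : ℕ → ℕ) (Z Y0 Y1 : ℕ → ℕ → Ω → ℝ) (s : ℕ) (ω : Ω) :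
    itthat n n1 Z (obs Z Y0 Y1) s ω = fitt (n s) (n1 s) (pairs Y0 Y1 Z s ω) := rfl

lemma vrob_eq_fvrob (n n1 : ℕ → ℕ) (Z Y0 Y1 : ℕ → ℕ → Ω → ℝ) (s : ℕ) (ω : Ω) :
    vrob n n1 Z (obs Z Y0 Y1) s ω = fvrob (n s) (n1 s) (pairs Y0 Y1 Z s ω) := rfl

lemma integrable_of_bound [IsProbabilityMeasure P] {f : Ω → ℝ}
    (hf : AEStronglyMeasurable f P) {C : ℝ} (h : ∀ᵐ ω ∂P, |f ω| ≤ C) : Integrable f P :=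
  (memLp_top_of_bound hf C (by simpa [Real.norm_eq_abs] using h)).integrable le_top

set_option linter.unusedSectionVars false

/-- Unbiasedness of the site-level difference-in-means estimator. -/
lemma itt_unbiased [IsProbabilityMeasure P] (n n1 : ℕ → ℕ) (Z Y0 Y1 : ℕ → ℕ → Ω → ℝ)
    (hmeas : ∀ s i, Measurable (Z s i) ∧ Measurable (Y0 s i) ∧ Measurable (Y1 s i))
    (hZ01 : ∀ s i ω, Z s i ω = 0 ∨ Z s i ω = 1)
    {C : ℝ} (hY : ∀ s i ω, |Y0 s i ω| ≤ C ∧ |Y1 s i ω| ≤ C)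
    (hA2 : Assumption2 P (fun s i ω => (Y0 s i ω, Y1 s i ω)) Z)
    (s : ℕ) (hk2 : 2 ≤ n1 s) (hkN : n1 s + 2 ≤ n s)
    (hsZ : ∀ᵐ ω ∂P, ∑ i ∈ Finset.range (n s), Z s i ω = (n1 s : ℝ)) :
    ∫ ω, itthat n n1 Z (obs Z Y0 Y1) s ω ∂P = popEff P Y0 Y1 s := by
  obtain ⟨hiid, hid, hWZ, hsites⟩ := hA2
  have hmZ : ∀ i, Measurable (Z s i) := fun i => (hmeas s i).1
  have hmY0 : ∀ i, Measurable (Y0 s i) := fun i => (hmeas s i).2.1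
  have hmY1 : ∀ i, Measurable (Y1 s i) := fun i => (hmeas s i).2.2
  have hZb : ∀ i ω, |Z s i ω| ≤ 1 := by
    intro i ω; rcases hZ01 s i ω with h | h <;> simp [h]
  have hmobs : ∀ i, Measurable (obs Z Y0 Y1 s i) := by
    intro i; unfold obs
    exact ((hmZ i).mul (hmY1 i)).add ((measurable_const.sub (hmZ i)).mul (hmY0 i))
  have hobsb : ∀ i ω, |obs Z Y0 Y1 s i ω| ≤ C := by
    intro i ω; rcases hZ01 s i ω with h | h <;> simp [obs, h]
    · exact (hY s i ω).1
    · exact (hY s i ω).2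
  have hZobs : ∀ i ω, Z s i ω * obs Z Y0 Y1 s i ω = Z s i ω * Y1 s i ω := by
    intro i ω; rcases hZ01 s i ω with h | h <;> simp [obs, h]
  have h1Zobs : ∀ i ω, (1 - Z s i ω) * obs Z Y0 Y1 s i ω = (1 - Z s i ω) * Y0 s i ω := by
    intro i ω; rcases hZ01 s i ω with h | h <;> simp [obs, h]
  -- independences
  have hindep1 : ∀ i, IndepFun (fun ω => Z s i ω) (fun ω => Y1 s i ω) P := by
    intro i
    exact (hWZ s).symm.comp (measurable_pi_apply i)
      (measurable_snd.comp (measurable_pi_apply i))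
  have hindep0 : ∀ i, IndepFun (fun ω => 1 - Z s i ω) (fun ω => Y0 s i ω) P := by
    intro i
    exact (hWZ s).symm.comp (measurable_const.sub (measurable_pi_apply i))
      (measurable_fst.comp (measurable_pi_apply i))
  -- identical distributions
  have hY1id : ∀ i, ∫ ω, Y1 s i ω ∂P = ∫ ω, Y1 s 0 ω ∂P := fun i =>
    ((hid s i 0).comp measurable_snd).integral_eq
  have hY0id : ∀ i, ∫ ω, Y0 s i ω ∂P = ∫ ω, Y0 s 0 ω ∂P := fun i =>
    ((hid s i 0).comp measurable_fst).integral_eq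
  -- integrabilities
  have hintZ : ∀ i, Integrable (fun ω => Z s i ω) P := fun i =>
    integrable_of_bound (hmZ i).aestronglyMeasurable (Eventually.of_forall (hZb i))
  have hint1Z : ∀ i, Integrable (fun ω => 1 - Z s i ω) P := fun i =>
    (integrable_const 1).sub (hintZ i)
  have hintY1 : ∀ i, Integrable (fun ω => Y1 s i ω) P := fun i =>
    integrable_of_bound (hmY1 i).aestronglyMeasurable
      (Eventually.of_forall fun ω => (hY s i ω).2)
  have hintY0 : ∀ i, Integrable (fun ω => Y0 s i ω) P := fun i =>
    integrable_of_bound (hmY0 i).aestronglyMeasurable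
      (Eventually.of_forall fun ω => (hY s i ω).1)
  have hintZobs : ∀ i, Integrable (fun ω => Z s i ω * obs Z Y0 Y1 s i ω) P := by
    intro i
    refine integrable_of_bound (C := C) ((hmZ i).mul (hmobs i)).aestronglyMeasurable
      (Eventually.of_forall fun ω => ?_)
    rw [abs_mul]
    calc |Z s i ω| * |obs Z Y0 Y1 s i ω| ≤ 1 * C :=
          mul_le_mul (hZb i ω) (hobsb i ω) (abs_nonneg _) zero_le_one
      _ = C := one_mul C
  have hint1Zobs : ∀ i, Integrable (fun ω => (1 - Z s i ω) * obs Z Y0 Y1 s i ω) P := by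
    intro i
    refine integrable_of_bound (C := C) ((measurable_const.sub (hmZ i)).mul
      (hmobs i)).aestronglyMeasurable (Eventually.of_forall fun ω => ?_)
    rw [abs_mul]
    have h1 : |1 - Z s i ω| ≤ 1 := by rcases hZ01 s i ω with h | h <;> simp [h]
    calc |1 - Z s i ω| * |obs Z Y0 Y1 s i ω| ≤ 1 * C :=
          mul_le_mul h1 (hobsb i ω) (abs_nonneg _) zero_le_one
      _ = C := one_mul C
  -- sum of treatment indicators
  have hsumZ : ∑ i ∈ Finset.range (n s), ∫ ω, Z s i ω ∂P = (n1 s : ℝ) := by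
    rw [← integral_finset_sum _ (fun i _ => hintZ i)]
    rw [integral_congr_ae (hsZ.mono fun ω h => h)]
    simp
  have hsum1Z : ∑ i ∈ Finset.range (n s), ∫ ω, (1 - Z s i ω) ∂P = ((n s - n1 s : ℕ) : ℝ) := by
    have : ∀ i, ∫ ω, (1 - Z s i ω) ∂P = 1 - ∫ ω, Z s i ω ∂P := by
      intro i
      rw [integral_sub (integrable_const 1) (hintZ i)]
      simp
    rw [Finset.sum_congr rfl (fun i _ => this i), Finset.sum_sub_distrib, hsumZ]
    rw [Finset.sum_const, Finset.card_range, Nat.cast_sub (by omega : n1 s ≤ n s)]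
    simp
  -- ∫ mean1
  have hmean1 : ∫ ω, mean1 n n1 Z (obs Z Y0 Y1) s ω ∂P = ∫ ω, Y1 s 0 ω ∂P := by
    unfold mean1
    rw [integral_div, integral_finset_sum _ (fun i _ => hintZobs i)]
    have heach : ∀ i, ∫ ω, Z s i ω * obs Z Y0 Y1 s i ω ∂P
        = (∫ ω, Z s i ω ∂P) * ∫ ω, Y1 s 0 ω ∂P := by
      intro i
      have h1 : ∫ ω, Z s i ω * obs Z Y0 Y1 s i ω ∂P = ∫ ω, Z s i ω * Y1 s i ω ∂P :=
        integral_congr_ae (Eventually.of_forall fun ω => hZobs i ω)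
      have h2 := (hindep1 i).integral_mul_eq_mul_integral (hmZ i).aestronglyMeasurable
        (hmY1 i).aestronglyMeasurable
      rw [h1]
      have h3 : ∫ ω, Z s i ω * Y1 s i ω ∂P
          = ∫ ω, ((fun ω => Z s i ω) * fun ω => Y1 s i ω) ω ∂P := by
        simp [Pi.mul_apply]
      rw [h3, h2, hY1id i]
    rw [Finset.sum_congr rfl (fun i _ => heach i), ← Finset.sum_mul, hsumZ]
    have hk0 : (n1 s : ℝ) ≠ 0 := by
      have : 0 < n1 s := by omega
      exact_mod_cast this.ne'
    field_simp
  -- ∫ mean0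
  have hmean0 : ∫ ω, mean0 n n1 Z (obs Z Y0 Y1) s ω ∂P = ∫ ω, Y0 s 0 ω ∂P := by
    unfold mean0
    rw [integral_div, integral_finset_sum _ (fun i _ => hint1Zobs i)]
    have heach : ∀ i, ∫ ω, (1 - Z s i ω) * obs Z Y0 Y1 s i ω ∂P
        = (∫ ω, (1 - Z s i ω) ∂P) * ∫ ω, Y0 s 0 ω ∂P := by
      intro i
      have h1 : ∫ ω, (1 - Z s i ω) * obs Z Y0 Y1 s i ω ∂P
          = ∫ ω, (1 - Z s i ω) * Y0 s i ω ∂P :=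
        integral_congr_ae (Eventually.of_forall fun ω => h1Zobs i ω)
      have h2 := (hindep0 i).integral_mul_eq_mul_integral
        (measurable_const.sub (hmZ i)).aestronglyMeasurable (hmY0 i).aestronglyMeasurable
      rw [h1]
      have h3 : ∫ ω, (1 - Z s i ω) * Y0 s i ω ∂P
          = ∫ ω, ((fun ω => 1 - Z s i ω) * fun ω => Y0 s i ω) ω ∂P := by
        simp [Pi.mul_apply]
      rw [h3, h2, hY0id i]
    rw [Finset.sum_congr rfl (fun i _ => heach i), ← Finset.sum_mul, hsum1Z]
    have hn0 : ((n s - n1 s : ℕ) : ℝ) ≠ 0 := by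
      have : 0 < n s - n1 s := by omega
      exact_mod_cast this.ne'
    field_simp
  -- combine
  have hintm1 : Integrable (fun ω => mean1 n n1 Z (obs Z Y0 Y1) s ω) P := by
    unfold mean1
    exact (integrable_finset_sum _ (fun i _ => hintZobs i)).div_const _
  have hintm0 : Integrable (fun ω => mean0 n n1 Z (obs Z Y0 Y1) s ω) P := by
    unfold mean0
    exact (integrable_finset_sum _ (fun i _ => hint1Zobs i)).div_const _
  have : ∫ ω, itthat n n1 Z (obs Z Y0 Y1) s ω ∂P
      = ∫ ω, mean1 n n1 Z (obs Z Y0 Y1) s ω ∂P - ∫ ω, mean0 n n1 Z (obs Z Y0 Y1) s ω ∂P := by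
    unfold itthat
    exact integral_sub hintm1 hintm0
  rw [this, hmean1, hmean0, popEff]
  exact (integral_sub (hintY1 0) (hintY0 0)).symm


lemma avg_bound (S : ℕ) (x : ℕ → ℝ) {B : ℝ} (hB : 0 ≤ B)
    (h : ∀ s ∈ Finset.range S, |x s| ≤ B) :
    |(∑ s ∈ Finset.range S, x s)/(S:ℝ)| ≤ B := by
  rcases Nat.eq_zero_or_pos S with hS | hS
  · simp [hS, hB]
  have hSpos : (0:ℝ) < S := by exact_mod_cast hS
  rw [abs_div, abs_of_pos hSpos, div_le_iff₀ hSpos]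
  calc |∑ s ∈ Finset.range S, x s| ≤ ∑ s ∈ Finset.range S, |x s| :=
        Finset.abs_sum_le_sum_abs _ _
    _ ≤ ∑ _s ∈ Finset.range S, B := Finset.sum_le_sum h
    _ = B * S := by rw [Finset.sum_const, Finset.card_range, nsmul_eq_mul]; ring

lemma avg_sq_dev (S : ℕ) (hS : (S:ℝ) ≠ 0) (x : ℕ → ℝ) :
    (∑ s ∈ Finset.range S, (x s - (∑ s' ∈ Finset.range S, x s')/(S:ℝ))^2)/(S:ℝ)
      = (∑ s ∈ Finset.range S, (x s)^2)/(S:ℝ) - ((∑ s ∈ Finset.range S, x s)/(S:ℝ))^2 := by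
  set b : ℝ := (∑ s' ∈ Finset.range S, x s')/(S:ℝ) with hb
  have hSb : ∑ s ∈ Finset.range S, x s = (S:ℝ) * b := by rw [hb]; field_simp
  have hexp : ∑ s ∈ Finset.range S, (x s - b)^2
      = ∑ s ∈ Finset.range S, (x s)^2 - (S:ℝ)*b^2 := by
    have h1 : ∀ s, (x s - b)^2 = (x s)^2 - 2*b*(x s) + b^2 := fun s => by ring
    rw [Finset.sum_congr rfl (fun s _ => h1 s), Finset.sum_add_distrib,
      Finset.sum_sub_distrib, ← Finset.mul_sum, hSb, Finset.sum_const, Finset.card_range,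
      nsmul_eq_mul]
    ring
  rw [hexp, sub_div]
  congr 1
  rw [mul_comm, mul_div_assoc, div_self hS, mul_one]

set_option maxHeartbeats 2000000 in
/-- Theorem 1, conservative variance estimator for the EB estimator. -/
theorem statement1
    {Ω : Type*} [MeasurableSpace Ω] (P : Measure Ω) [IsProbabilityMeasure P]
    (n n1 : ℕ → ℕ) (Z Y0 Y1 : ℕ → ℕ → Ω → ℝ)
    (hmeas : ∀ s i, Measurable (Z s i) ∧ Measurable (Y0 s i) ∧ Measurable (Y1 s i))
    (hZ01 : ∀ s i ω, Z s i ω = 0 ∨ Z s i ω = 1)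
    (hbd : ∃ C : ℝ, ∀ s i ω, |Y0 s i ω| ≤ C ∧ |Y1 s i ω| ≤ C)
    (hA1 : Assumption1 P n n1 Z)
    (hA2 : Assumption2 P (fun s i ω => (Y0 s i ω, Y1 s i ω)) Z)
    (wt : ℕ → ℝ)
    (hw0 : ∀ s, 0 ≤ wt s)
    (hwsum : ∀ S : ℕ, ∑ s ∈ Finset.range S, wt s = (S : ℝ))
    (hwbd : ∃ N : ℝ, 0 < N ∧ ∀ s, wt s ≤ N)
    (ITTpop : ℕ → ℝ)
    (hITTpop : ∀ S, ITTpop S = (∑ s ∈ Finset.range S, wt s * popEff P Y0 Y1 s) / (S : ℝ))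
    (sigma2ITT : ℕ → ℝ)
    (hsigma2 : ∀ S, sigma2ITT S =
      (∑ s ∈ Finset.range S, wt s * (popEff P Y0 Y1 s - ITTpop S) ^ 2) / (S : ℝ))
    (ITThatAgg : ℕ → Ω → ℝ)
    (hAgg : ∀ S ω, ITThatAgg S ω =
      (∑ s ∈ Finset.range S, wt s * itthat n n1 Z (obs Z Y0 Y1) s ω) / (S : ℝ))
    (phi1 : ℕ → ℕ → Ω → ℝ)
    (hphi1 : ∀ S s ω, phi1 S s ω = wt s *
      ((itthat n n1 Z (obs Z Y0 Y1) s ω - ITTpop S) ^ 2 - vrob n n1 Z (obs Z Y0 Y1) s ω))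
    (hLyapITT : Lyapunov P (fun _ s ω => wt s * itthat n n1 Z (obs Z Y0 Y1) s ω))
    (hLyapPhi : Lyapunov P phi1)
    (hITTlim : ∃ L : ℝ, Tendsto ITTpop atTop (nhds L))
    (phihat : ℕ → ℕ → Ω → ℝ)
    (hphihat : ∀ S s ω, phihat S s ω = wt s *
      ((itthat n n1 Z (obs Z Y0 Y1) s ω - ITThatAgg S ω) ^ 2 - vrob n n1 Z (obs Z Y0 Y1) s ω))
    (Vhat : ℕ → Ω → ℝ)
    (hVhat : ∀ S ω, Vhat S ω = (∑ s ∈ Finset.range S,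
      (phihat S s ω - (∑ s' ∈ Finset.range S, phihat S s' ω) / (S : ℝ)) ^ 2) / (S : ℝ))
    (L1 L2 V : ℝ)
    (hE1 : Tendsto
      (fun S => (∑ s ∈ Finset.range S, ∫ ω, phi1 S s ω ∂P) / (S : ℝ)) atTop (nhds L1))
    (hE2 : Tendsto
      (fun S => (∑ s ∈ Finset.range S, ∫ ω, (phi1 S s ω) ^ 2 ∂P) / (S : ℝ)) atTop (nhds L2))
    (hVlim : Tendsto
      (fun S => (∑ s ∈ Finset.range S, variance (phi1 S s) P) / (S : ℝ)) atTop (nhds V)) :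
    TendstoInMeasure P Vhat atTop (fun _ => L2 - L1 ^ 2) ∧ V ≤ L2 - L1 ^ 2 := by
  classical
  obtain ⟨C0, hbdC⟩ := hbd
  set C : ℝ := |C0| with hCdef
  have hC0 : 0 ≤ C := abs_nonneg _
  have hYb : ∀ s i ω, |Y0 s i ω| ≤ C ∧ |Y1 s i ω| ≤ C := fun s i ω =>
    ⟨le_trans (hbdC s i ω).1 (le_abs_self _), le_trans (hbdC s i ω).2 (le_abs_self _)⟩
  have wt1 : ∀ s, wt s = 1 := by
    intro s
    have h1 := hwsum (s+1)
    rw [Finset.sum_range_succ, hwsum s] at h1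
    push_cast at h1
    linarith
  -- measurability of the site statistics
  have hmT : ∀ s, Measurable (fun ω => itthat n n1 Z (obs Z Y0 Y1) s ω) := by
    intro s
    have h : (fun ω => itthat n n1 Z (obs Z Y0 Y1) s ω)
        = fitt (n s) (n1 s) ∘ pairs Y0 Y1 Z s := rfl
    rw [h]
    exact (measurable_fitt _ _).comp (measurable_pairs Y0 Y1 Z hmeas s)
  have hmR : ∀ s, Measurable (fun ω => vrob n n1 Z (obs Z Y0 Y1) s ω) := by
    intro s
    have h : (fun ω => vrob n n1 Z (obs Z Y0 Y1) s ω)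
        = fvrob (n s) (n1 s) ∘ pairs Y0 Y1 Z s := rfl
    rw [h]
    exact (measurable_fvrob _ _).comp (measurable_pairs Y0 Y1 Z hmeas s)
  -- a.e. facts
  have hsZ : ∀ s, ∀ᵐ ω ∂P, ∑ i ∈ Finset.range (n s), Z s i ω = (n1 s : ℝ) :=
    sumZ_ae n n1 Z (fun s i => (hmeas s i).1) hA1
  have hobsb : ∀ s i ω, |obs Z Y0 Y1 s i ω| ≤ C := by
    intro s i ω; rcases hZ01 s i ω with h | h <;> simp [obs, h]
    exacts [(hYb s i ω).1, (hYb s i ω).2]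
  have hTR : ∀ᵐ ω ∂P, ∀ s, |itthat n n1 Z (obs Z Y0 Y1) s ω| ≤ 2*C
      ∧ 0 ≤ vrob n n1 Z (obs Z Y0 Y1) s ω ∧ vrob n n1 Z (obs Z Y0 Y1) s ω ≤ 8*C^2 := by
    rw [ae_all_iff]
    intro s
    filter_upwards [hsZ s] with ω hω
    exact site_bounds n n1 Z (obs Z Y0 Y1) s ω (hA1 s).1 (hA1 s).2.1
      (fun i => hZ01 s i ω) hω (fun i => hobsb s i ω)
  -- bounds for popEff and ITTpop
  have hpopb : ∀ s, |popEff P Y0 Y1 s| ≤ 2*C := by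
    intro s
    have h1 : ∀ᵐ ω ∂P, ‖Y1 s 0 ω - Y0 s 0 ω‖ ≤ 2*C := by
      refine Eventually.of_forall fun ω => ?_
      rw [Real.norm_eq_abs]
      calc |Y1 s 0 ω - Y0 s 0 ω| ≤ |Y1 s 0 ω| + |Y0 s 0 ω| := abs_sub _ _
        _ ≤ 2*C := by linarith [(hYb s 0 ω).1, (hYb s 0 ω).2]
    have h2 := norm_integral_le_of_norm_le_const h1
    rw [popEff]
    simpa [Real.norm_eq_abs, measure_univ] using h2
  have hmb : ∀ S, |ITTpop S| ≤ 2*C := by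
    intro S
    rw [hITTpop S]
    refine avg_bound S _ (by linarith) fun s _ => ?_
    rw [wt1 s, one_mul]; exact hpopb s
  -- pointwise bound for phi1 on the good event
  have hphib : ∀ S s ω,
      (|itthat n n1 Z (obs Z Y0 Y1) s ω| ≤ 2*C
        ∧ 0 ≤ vrob n n1 Z (obs Z Y0 Y1) s ω ∧ vrob n n1 Z (obs Z Y0 Y1) s ω ≤ 8*C^2)
      → |phi1 S s ω| ≤ 24*C^2 := by
    rintro S s ω ⟨h1, h2, h3⟩
    rw [hphi1, wt1, one_mul]
    have habs : |itthat n n1 Z (obs Z Y0 Y1) s ω - ITTpop S| ≤ 4*C := by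
      calc |itthat n n1 Z (obs Z Y0 Y1) s ω - ITTpop S|
          ≤ |itthat n n1 Z (obs Z Y0 Y1) s ω| + |ITTpop S| := abs_sub _ _
        _ ≤ 4*C := by linarith [hmb S]
    have hsq : (itthat n n1 Z (obs Z Y0 Y1) s ω - ITTpop S)^2 ≤ 16*C^2 := by
      calc (itthat n n1 Z (obs Z Y0 Y1) s ω - ITTpop S)^2
          = |itthat n n1 Z (obs Z Y0 Y1) s ω - ITTpop S|^2 := (sq_abs _).symm
        _ ≤ (4*C)^2 := pow_le_pow_left₀ (abs_nonneg _) habs 2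
        _ = 16*C^2 := by ring
    rw [abs_le]
    constructor
    · nlinarith [sq_nonneg (itthat n n1 Z (obs Z Y0 Y1) s ω - ITTpop S)]
    · nlinarith [sq_nonneg (itthat n n1 Z (obs Z Y0 Y1) s ω - ITTpop S)]
  -- measurability of phi1
  have hmphi : ∀ S s, Measurable (phi1 S s) := by
    intro S s
    have h : phi1 S s = fun ω => (itthat n n1 Z (obs Z Y0 Y1) s ω - ITTpop S)^2
        - vrob n n1 Z (obs Z Y0 Y1) s ω := by
      funext ω; rw [hphi1, wt1, one_mul]
    rw [h]
    exact (((hmT s).sub_const _).pow_const 2).sub (hmR s)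
  -- independence of phi1 across sites
  have hindphi : ∀ S, Set.Pairwise ↑(Finset.range S)
      (fun i j => IndepFun (phi1 S i) (phi1 S j) P) := by
    intro S
    have hrep : (fun s => phi1 S s) = fun s =>
        (fun p : SiteSpace => (fitt (n s) (n1 s) p - ITTpop S)^2 - fvrob (n s) (n1 s) p)
          ∘ pairs Y0 Y1 Z s := by
      funext s ω
      rw [hphi1, wt1, one_mul]; rfl
    have hiind : iIndepFun (fun s => phi1 S s) P := by
      rw [hrep]
      exact hA2.2.2.2.comp _ fun s =>
        (((measurable_fitt _ _).sub_const _).pow_const 2).sub (measurable_fvrob _ _)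
    exact fun i _ j _ hij => hiind.indepFun hij
  have hphiae : ∀ S s, ∀ᵐ ω ∂P, |phi1 S s ω| ≤ 24*C^2 := by
    intro S s
    filter_upwards [hTR] with ω hω
    exact hphib S s ω (hω s)
  -- WLLN for phi1
  have hU1 : TendstoInMeasure P (fun S ω => (∑ s ∈ Finset.range S, phi1 S s ω)/(S:ℝ))
      atTop (fun _ => L1) :=
    wlln phi1 (24*C^2) (fun S s => (hmphi S s).aestronglyMeasurable) hphiae hindphi hE1
  -- WLLN for phi1 squared
  have hU2 : TendstoInMeasure P
      (fun S ω => (∑ s ∈ Finset.range S, (phi1 S s ω)^2)/(S:ℝ)) atTop (fun _ => L2) := by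
    refine wlln (fun S s ω => (phi1 S s ω)^2) ((24*C^2)^2)
      (fun S s => ((hmphi S s).pow_const 2).aestronglyMeasurable) ?_ ?_ hE2
    · intro S s
      filter_upwards [hphiae S s] with ω hω
      rw [abs_of_nonneg (sq_nonneg _)]
      calc (phi1 S s ω)^2 = |phi1 S s ω|^2 := (sq_abs _).symm
        _ ≤ (24*C^2)^2 := pow_le_pow_left₀ (abs_nonneg _) hω 2
    · intro S i hi j hj hij
      exact (hindphi S hi hj hij).comp (measurable_id.pow_const 2) (measurable_id.pow_const 2)
  -- unbiasedness and WLLN for the aggregate contrast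
  have hintT : ∀ s, Integrable (fun ω => itthat n n1 Z (obs Z Y0 Y1) s ω) P := by
    intro s
    refine integrable_of_bound (C := 2*C) (hmT s).aestronglyMeasurable ?_
    filter_upwards [hTR] with ω hω
    exact (hω s).1
  have hunb : ∀ s, ∫ ω, itthat n n1 Z (obs Z Y0 Y1) s ω ∂P = popEff P Y0 Y1 s :=
    fun s => itt_unbiased n n1 Z Y0 Y1 hmeas hZ01 hYb hA2 s (hA1 s).1 (hA1 s).2.1 (hsZ s)
  have hD : TendstoInMeasure P
      (fun S ω => (∑ s ∈ Finset.range S,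
        (popEff P Y0 Y1 s - itthat n n1 Z (obs Z Y0 Y1) s ω))/(S:ℝ))
      atTop (fun _ => (0:ℝ)) := by
    refine wlln (fun _ s ω => popEff P Y0 Y1 s - itthat n n1 Z (obs Z Y0 Y1) s ω) (4*C)
      (fun S s => (measurable_const.sub (hmT s)).aestronglyMeasurable) ?_ ?_ ?_
    · intro S s
      filter_upwards [hTR] with ω hω
      calc |popEff P Y0 Y1 s - itthat n n1 Z (obs Z Y0 Y1) s ω|
          ≤ |popEff P Y0 Y1 s| + |itthat n n1 Z (obs Z Y0 Y1) s ω| := abs_sub _ _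
        _ ≤ 4*C := by linarith [hpopb s, (hω s).1]
    · intro S
      have hiind : iIndepFun
          (fun s ω => popEff P Y0 Y1 s - itthat n n1 Z (obs Z Y0 Y1) s ω) P :=
        hA2.2.2.2.comp
          (fun s => fun p : SiteSpace => popEff P Y0 Y1 s - fitt (n s) (n1 s) p)
          (fun s => measurable_const.sub (measurable_fitt _ _))
      exact fun i _ j _ hij => hiind.indepFun hij
    · have hz : ∀ S : ℕ, (∑ s ∈ Finset.range S,
          ∫ ω, (popEff P Y0 Y1 s - itthat n n1 Z (obs Z Y0 Y1) s ω) ∂P)/(S:ℝ) = 0 := by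
        intro S
        rw [Finset.sum_eq_zero, zero_div]
        intro s _
        rw [integral_sub (integrable_const _) (hintT s), integral_const, hunb s]
        simp [measure_univ]
      exact Tendsto.congr (fun S => (hz S).symm) tendsto_const_nhds
  -- the deviation of the aggregate estimate
  have hdeq : ∀ S ω, ITTpop S - ITThatAgg S ω
      = (∑ s ∈ Finset.range S,
          (popEff P Y0 Y1 s - itthat n n1 Z (obs Z Y0 Y1) s ω))/(S:ℝ) := by
    intro S ω
    rw [hITTpop S, hAgg S ω, div_sub_div_same, ← Finset.sum_sub_distrib]
    congr 1
    refine Finset.sum_congr rfl fun s _ => ?_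
    rw [wt1 s, one_mul, one_mul]
  have hd : TendstoInMeasure P (fun S ω => ITTpop S - ITThatAgg S ω) atTop
      (fun _ => (0:ℝ)) := by
    have heq : (fun S ω => ITTpop S - ITThatAgg S ω)
        = fun S ω => (∑ s ∈ Finset.range S,
            (popEff P Y0 Y1 s - itthat n n1 Z (obs Z Y0 Y1) s ω))/(S:ℝ) :=
      funext fun S => funext fun ω => hdeq S ω
    rw [heq]; exact hD
  have hAgg' : ∀ S ω, ITThatAgg S ω
      = (∑ s ∈ Finset.range S, itthat n n1 Z (obs Z Y0 Y1) s ω)/(S:ℝ) := by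
    intro S ω
    rw [hAgg S ω]
    congr 1
    exact Finset.sum_congr rfl fun s _ => by rw [wt1 s, one_mul]
  -- the error term
  set err : ℕ → Ω → ℝ := fun S ω => Vhat S ω
    - ((∑ s ∈ Finset.range S, (phi1 S s ω)^2)/(S:ℝ)
      - ((∑ s ∈ Finset.range S, phi1 S s ω)/(S:ℝ))^2) with herrdef
  have herr : ∀ S, ∀ᵐ ω ∂P, |err S ω| ≤ (896 * C ^ 3 + 1) * |ITTpop S - ITThatAgg S ω| := by
    intro S
    rcases Nat.eq_zero_or_pos S with hS0 | hSpos
    · subst hS0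
      refine Eventually.of_forall fun ω => ?_
      have hv : Vhat 0 ω = 0 := by rw [hVhat]; simp
      have he : err 0 ω = 0 := by rw [herrdef]; simp [hv]
      rw [he]
      simp only [abs_zero]
      positivity
    · filter_upwards [hTR] with ω hω
      have hS0 : ((S:ℝ)) ≠ 0 := by
        have : (0:ℝ) < S := by exact_mod_cast hSpos
        exact this.ne'
      set A := ITThatAgg S ω with hAdef
      set m := ITTpop S with hmdef
      set dd := m - A with hdddef
      set c : ℕ → ℝ := fun s => 2*itthat n n1 Z (obs Z Y0 Y1) s ω - A - m with hcdef
      have hAavg : A = (∑ s ∈ Finset.range S, itthat n n1 Z (obs Z Y0 Y1) s ω)/(S:ℝ) :=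
        hAgg' S ω
      have hphihat_eq : ∀ s, phihat S s ω = phi1 S s ω + dd * c s := by
        intro s
        rw [hphihat, hphi1, wt1, one_mul, one_mul, hdddef, hcdef]
        simp only []
        ring
      have hVexp : Vhat S ω = (∑ s ∈ Finset.range S, (phihat S s ω)^2)/(S:ℝ)
          - ((∑ s ∈ Finset.range S, phihat S s ω)/(S:ℝ))^2 := by
        rw [hVhat S ω]
        exact avg_sq_dev S hS0 (fun s => phihat S s ω)
      have hsT : ∑ s ∈ Finset.range S, itthat n n1 Z (obs Z Y0 Y1) s ω = (S:ℝ) * A := by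
        rw [hAavg]; field_simp
      have hsum_c : ∑ s ∈ Finset.range S, c s = -((S:ℝ)*dd) := by
        simp only [hcdef]
        rw [Finset.sum_sub_distrib, Finset.sum_sub_distrib, ← Finset.mul_sum, hsT,
          Finset.sum_const, Finset.sum_const, Finset.card_range, nsmul_eq_mul,
          nsmul_eq_mul, hdddef]
        ring
      have hsq_sum : ∑ s ∈ Finset.range S, (phihat S s ω)^2
          = ∑ s ∈ Finset.range S, (phi1 S s ω)^2
            + 2*dd*(∑ s ∈ Finset.range S, phi1 S s ω * c s)
            + dd^2 * (∑ s ∈ Finset.range S, (c s)^2) := by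
        have h1 : ∀ s ∈ Finset.range S, (phihat S s ω)^2
            = (phi1 S s ω)^2 + 2*dd*(phi1 S s ω * c s) + dd^2*(c s)^2 := by
          intro s _; rw [hphihat_eq s]; ring
        rw [Finset.sum_congr rfl h1, Finset.sum_add_distrib, Finset.sum_add_distrib,
          ← Finset.mul_sum, ← Finset.mul_sum]
      have hlin_sum : ∑ s ∈ Finset.range S, phihat S s ω
          = ∑ s ∈ Finset.range S, phi1 S s ω + dd * ∑ s ∈ Finset.range S, c s := by
        rw [Finset.sum_congr rfl fun s _ => hphihat_eq s, Finset.sum_add_distrib,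
          ← Finset.mul_sum]
      have herr_eq : err S ω
          = 2*dd*((∑ s ∈ Finset.range S, phi1 S s ω * c s)/(S:ℝ))
            + dd^2*((∑ s ∈ Finset.range S, (c s)^2)/(S:ℝ))
            + 2*((∑ s ∈ Finset.range S, phi1 S s ω)/(S:ℝ))*dd^2 - dd^4 := by
        rw [herrdef]
        simp only []
        rw [hVexp, hsq_sum, hlin_sum, hsum_c]
        field_simp
        ring
      -- bounds
      have hb_phi : ∀ s ∈ Finset.range S, |phi1 S s ω| ≤ 24*C^2 :=
        fun s _ => hphib S s ω (hω s)
      have hAb : |A| ≤ 2*C := by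
        rw [hAavg]
        exact avg_bound S _ (by linarith) (fun s _ => (hω s).1)
      have hddb : |dd| ≤ 4*C := by
        rw [hdddef]
        calc |m - A| ≤ |m| + |A| := abs_sub _ _
          _ ≤ 4*C := by linarith [hmb S]
      have hcb : ∀ s ∈ Finset.range S, |c s| ≤ 8*C := by
        intro s _
        have h1 := abs_le.mp (hω s).1
        have h2 := abs_le.mp hAb
        have h3 := abs_le.mp (hmb S)
        have hce : c s = 2*itthat n n1 Z (obs Z Y0 Y1) s ω - A - m := by rw [hcdef]
        rw [hce, abs_le]
        constructor <;> linarith [h1.1, h1.2, h2.1, h2.2, h3.1, h3.2]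
      have hq1b : |(∑ s ∈ Finset.range S, phi1 S s ω * c s)/(S:ℝ)| ≤ 192*C^3 := by
        refine avg_bound S _ (by positivity) fun s hs => ?_
        rw [abs_mul]
        calc |phi1 S s ω| * |c s| ≤ (24*C^2) * (8*C) :=
              mul_le_mul (hb_phi s hs) (hcb s hs) (abs_nonneg _) (by positivity)
          _ = 192*C^3 := by ring
      have hq2b : |(∑ s ∈ Finset.range S, (c s)^2)/(S:ℝ)| ≤ 64*C^2 := by
        refine avg_bound S _ (by positivity) fun s hs => ?_
        rw [abs_of_nonneg (sq_nonneg _)]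
        calc (c s)^2 = |c s|^2 := (sq_abs _).symm
          _ ≤ (8*C)^2 := pow_le_pow_left₀ (abs_nonneg _) (hcb s hs) 2
          _ = 64*C^2 := by ring
      have hp1b : |(∑ s ∈ Finset.range S, phi1 S s ω)/(S:ℝ)| ≤ 24*C^2 :=
        avg_bound S _ (by positivity) hb_phi
      rw [herr_eq]
      set q1 := (∑ s ∈ Finset.range S, phi1 S s ω * c s)/(S:ℝ) with hq1
      set q2 := (∑ s ∈ Finset.range S, (c s)^2)/(S:ℝ) with hq2
      set p1 := (∑ s ∈ Finset.range S, phi1 S s ω)/(S:ℝ) with hp1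
      have e1 : |2*dd*q1| = 2 * |dd| * |q1| := by rw [abs_mul, abs_mul, abs_two]
      have e2 : |dd^2*q2| = |dd| ^ 2 * |q2| := by rw [abs_mul, abs_pow]
      have e3 : |2*p1*dd^2| = 2 * |p1| * |dd| ^ 2 := by rw [abs_mul, abs_mul, abs_two, abs_pow]
      have e4 : |dd^4| = |dd| ^ 4 := abs_pow dd 4
      have htri : |2*dd*q1 + dd^2*q2 + 2*p1*dd^2 - dd^4|
          ≤ 2 * |dd| * |q1| + |dd| ^ 2 * |q2| + 2 * |p1| * |dd| ^ 2 + |dd| ^ 4 := by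
        calc |2*dd*q1 + dd^2*q2 + 2*p1*dd^2 - dd^4|
            ≤ |2*dd*q1 + dd^2*q2 + 2*p1*dd^2| + |dd^4| := abs_sub _ _
          _ ≤ |2*dd*q1 + dd^2*q2| + |2*p1*dd^2| + |dd^4| := by
              linarith [abs_add_le (2*dd*q1 + dd^2*q2) (2*p1*dd^2)]
          _ ≤ |2*dd*q1| + |dd^2*q2| + |2*p1*dd^2| + |dd^4| := by
              linarith [abs_add_le (2*dd*q1) (dd^2*q2)]
          _ = 2 * |dd| * |q1| + |dd| ^ 2 * |q2| + 2 * |p1| * |dd| ^ 2 + |dd| ^ 4 := by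
              rw [e1, e2, e3, e4]
      have hD0 : 0 ≤ |dd| := abs_nonneg _
      have hsq' : |dd| ^ 2 ≤ 4 * C * |dd| := by
        rw [sq]; exact mul_le_mul_of_nonneg_right hddb hD0
      have t1 : 2 * |dd| * |q1| ≤ 384 * C ^ 3 * |dd| := by
        have h := mul_le_mul_of_nonneg_left hq1b
          (by positivity : (0:ℝ) ≤ 2 * |dd|)
        linarith [h]
      have t2 : |dd| ^ 2 * |q2| ≤ 256 * C ^ 3 * |dd| := by
        have h1 : |dd| ^ 2 * |q2| ≤ |dd| ^ 2 * (64 * C ^ 2) :=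
          mul_le_mul_of_nonneg_left hq2b (sq_nonneg _)
        have h2 := mul_le_mul_of_nonneg_left hsq'
          (by positivity : (0:ℝ) ≤ 64 * C ^ 2)
        linarith [h1, h2]
      have t3 : 2 * |p1| * |dd| ^ 2 ≤ 192 * C ^ 3 * |dd| := by
        have h1 : 2 * |p1| * |dd| ^ 2 ≤ (48 * C ^ 2) * |dd| ^ 2 :=
          mul_le_mul_of_nonneg_right (by linarith [hp1b]) (sq_nonneg _)
        have h2 := mul_le_mul_of_nonneg_left hsq'
          (by positivity : (0:ℝ) ≤ 48 * C ^ 2)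
        linarith [h1, h2]
      have t4 : |dd| ^ 4 ≤ 64 * C ^ 3 * |dd| := by
        have h1 : |dd| ^ 3 ≤ (4 * C) ^ 3 := pow_le_pow_left₀ hD0 hddb 3
        have h2 := mul_le_mul_of_nonneg_right h1 hD0
        have h3 : |dd| ^ 3 * |dd| = |dd| ^ 4 := by ring
        have h4 : (4 * C) ^ 3 * |dd| = 64 * C ^ 3 * |dd| := by ring
        linarith [h2]
      have hddeq : |ITTpop S - ITThatAgg S ω| = |dd| := by rw [hdddef, hmdef, hAdef]
      rw [hddeq]
      linarith [htri, t1, t2, t3, t4]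
  have herr0 : TendstoInMeasure P err atTop (fun _ => (0:ℝ)) :=
    tim_dom (by positivity : (0:ℝ) < 896*C^3+1) herr hd
  -- square of the average of phi1
  have hshift : TendstoInMeasure P
      (fun S ω => (∑ s ∈ Finset.range S, phi1 S s ω)/(S:ℝ) - L1) atTop
      (fun _ => (0:ℝ)) :=
    (tim_iff_of_abs_eq (by intro S ω; simp)).mp hU1
  have hsq0 : TendstoInMeasure P
      (fun S ω => ((∑ s ∈ Finset.range S, phi1 S s ω)/(S:ℝ))^2 - L1^2) atTop
      (fun _ => (0:ℝ)) := by
    refine tim_dom (M := 24*C^2 + |L1| + 1) (by positivity) ?_ hshift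
    intro S
    filter_upwards [hTR] with ω hω
    have hxb : |(∑ s ∈ Finset.range S, phi1 S s ω)/(S:ℝ)| ≤ 24*C^2 :=
      avg_bound S _ (by positivity) (fun s _ => hphib S s ω (hω s))
    set x := (∑ s ∈ Finset.range S, phi1 S s ω)/(S:ℝ) with hx
    have hfact : |x^2 - L1^2| = |x - L1| * |x + L1| := by
      rw [← abs_mul]
      congr 1
      ring
    rw [hfact, mul_comm ((24:ℝ)*C^2 + |L1| + 1) _]
    refine mul_le_mul_of_nonneg_left ?_ (abs_nonneg _)
    calc |x + L1| ≤ |x| + |L1| := abs_add_le _ _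
      _ ≤ 24*C^2 + |L1| + 1 := by linarith
  have hsq : TendstoInMeasure P
      (fun S ω => ((∑ s ∈ Finset.range S, phi1 S s ω)/(S:ℝ))^2) atTop
      (fun _ => L1^2) :=
    (tim_iff_of_abs_eq (by intro S ω; simp)).mpr hsq0
  have hnegsq : TendstoInMeasure P
      (fun S ω => -(((∑ s ∈ Finset.range S, phi1 S s ω)/(S:ℝ))^2)) atTop
      (fun _ => -(L1^2)) := by
    refine (tim_iff_of_abs_eq (fun S ω => ?_)).mp hsq
    rw [← abs_neg]
    congr 1
    ring
  have hfinal0 := tim_add (tim_add hU2 hnegsq) herr0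
  have hfinal : TendstoInMeasure P Vhat atTop (fun _ => L2 - L1^2) := by
    refine (tim_iff_of_abs_eq (fun S ω => ?_)).mp hfinal0
    rw [herrdef]
    simp only []
    congr 1
    ring
  -- Part 2 : conservativeness
  have hmemphi : ∀ S s, MemLp (phi1 S s) 2 P := fun S s =>
    (memLp_top_of_bound (hmphi S s).aestronglyMeasurable _
      (by simpa [Real.norm_eq_abs] using hphiae S s)).mono_exponent le_top
  have hvar_eq : ∀ S s, (∫ ω, phi1 S s ω ∂P)^2
      = (∫ ω, (phi1 S s ω)^2 ∂P) - variance (phi1 S s) P := by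
    intro S s
    have h := variance_eq_sub (hmemphi S s)
    have h2 : ∫ x, ((phi1 S s) ^ 2) x ∂P = ∫ ω, (phi1 S s ω)^2 ∂P := by
      refine integral_congr_ae (Eventually.of_forall fun ω => ?_)
      simp
    rw [h2] at h
    linarith
  have hsqmeans : Tendsto
      (fun S : ℕ => (∑ s ∈ Finset.range S, (∫ ω, phi1 S s ω ∂P)^2)/(S:ℝ))
      atTop (nhds (L2 - V)) := by
    have heq : ∀ S : ℕ, (∑ s ∈ Finset.range S, ∫ ω, (phi1 S s ω)^2 ∂P)/(S:ℝ)
        - (∑ s ∈ Finset.range S, variance (phi1 S s) P)/(S:ℝ)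
        = (∑ s ∈ Finset.range S, (∫ ω, phi1 S s ω ∂P)^2)/(S:ℝ) := by
      intro S
      rw [← sub_div, ← Finset.sum_sub_distrib]
      congr 1
      exact Finset.sum_congr rfl fun s _ => (hvar_eq S s).symm
    exact Tendsto.congr heq (hE2.sub hVlim)
  have hCS : ∀ S : ℕ, 1 ≤ S → ((∑ s ∈ Finset.range S, ∫ ω, phi1 S s ω ∂P)/(S:ℝ))^2
      ≤ (∑ s ∈ Finset.range S, (∫ ω, phi1 S s ω ∂P)^2)/(S:ℝ) := by
    intro S hS
    have hSpos : (0:ℝ) < S := by exact_mod_cast hS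
    have h := Finset.sum_mul_sq_le_sq_mul_sq (Finset.range S)
      (fun s => ∫ ω, phi1 S s ω ∂P) (fun _ => (1:ℝ))
    simp only [mul_one, one_pow, Finset.sum_const, Finset.card_range, nsmul_eq_mul] at h
    rw [div_pow, div_le_div_iff₀ (by positivity) hSpos]
    calc (∑ s ∈ Finset.range S, ∫ ω, phi1 S s ω ∂P)^2 * (S:ℝ)
        ≤ ((∑ s ∈ Finset.range S, (∫ ω, phi1 S s ω ∂P)^2) * (S:ℝ)) * (S:ℝ) := by
          nlinarith [h]
      _ = (∑ s ∈ Finset.range S, (∫ ω, phi1 S s ω ∂P)^2) * ((S:ℝ))^2 := by ring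
  have hle : L1^2 ≤ L2 - V := by
    have h1 : Tendsto (fun S : ℕ =>
        ((∑ s ∈ Finset.range S, ∫ ω, phi1 S s ω ∂P)/(S:ℝ))^2) atTop (nhds (L1^2)) :=
      hE1.pow 2
    exact le_of_tendsto_of_tendsto h1 hsqmeans (eventually_atTop.mpr ⟨1, hCS⟩)
  exact ⟨hfinal, by linarith⟩

end MultiSite
end

section
/- Under Assumptions 1 and 2, for every site s and every mediator coordinate k, Cov(ITT̂_{M_k,s}, ITT̂_s) = Cov(M^r_{k,s}(0), Y^r_s(0))/n_{0s} + Cov(M^r_{k,s}(1), Y^r_s(1))/n_{1s}: the finite-population covariance correction term −Cov(M^r_{k,s}(1) − M^r_{k,s}(0), Y^r_s(1) − Y^r_s(0))/n_s arising conditionally on the potential outcomes cancels exactly with the covariance of the conditional means. -/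
open MeasureTheory ProbabilityTheory Filter Finset
open scoped ENNReal NNReal

namespace MultiSite

variable {Ω : Type*} [MeasurableSpace Ω]

/-- Bounded measurable real function. -/
def Bdd {Ω : Type*} [MeasurableSpace Ω] (f : Ω → ℝ) : Prop :=
  Measurable f ∧ ∃ C, ∀ ω, |f ω| ≤ C

lemma Bdd.const (c : ℝ) : Bdd (fun _ : Ω => c) :=
  ⟨measurable_const, |c|, fun _ => le_rfl⟩

lemma Bdd.mul {f g : Ω → ℝ} (hf : Bdd f) (hg : Bdd g) : Bdd (fun ω => f ω * g ω) := by
  obtain ⟨hfm, Cf, hCf⟩ := hf; obtain ⟨hgm, Cg, hCg⟩ := hg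
  exact ⟨hfm.mul hgm, Cf * Cg, fun ω => by
    rw [abs_mul]
    exact mul_le_mul (hCf ω) (hCg ω) (abs_nonneg _) ((abs_nonneg _).trans (hCf ω))⟩

lemma Bdd.add {f g : Ω → ℝ} (hf : Bdd f) (hg : Bdd g) : Bdd (fun ω => f ω + g ω) := by
  obtain ⟨hfm, Cf, hCf⟩ := hf; obtain ⟨hgm, Cg, hCg⟩ := hg
  exact ⟨hfm.add hgm, Cf + Cg, fun ω => (abs_add_le _ _).trans (add_le_add (hCf ω) (hCg ω))⟩

lemma Bdd.sub {f g : Ω → ℝ} (hf : Bdd f) (hg : Bdd g) : Bdd (fun ω => f ω - g ω) := by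
  obtain ⟨hfm, Cf, hCf⟩ := hf; obtain ⟨hgm, Cg, hCg⟩ := hg
  exact ⟨hfm.sub hgm, Cf + Cg, fun ω => (abs_sub _ _).trans (add_le_add (hCf ω) (hCg ω))⟩

lemma Bdd.div_const {f : Ω → ℝ} (hf : Bdd f) (c : ℝ) : Bdd (fun ω => f ω / c) := by
  obtain ⟨hfm, Cf, hCf⟩ := hf
  exact ⟨hfm.div_const c, Cf / |c|, fun ω => by
    rw [abs_div, div_eq_mul_inv, div_eq_mul_inv]
    exact mul_le_mul_of_nonneg_right (hCf ω) (inv_nonneg.mpr (abs_nonneg c))⟩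

lemma Bdd.integrable (P : Measure Ω) [IsProbabilityMeasure P] {f : Ω → ℝ} (hf : Bdd f) :
    Integrable f P := by
  obtain ⟨hfm, C, hC⟩ := hf
  exact (integrable_const C).mono' hfm.aestronglyMeasurable
    (Filter.Eventually.of_forall fun ω => by simpa using hC ω)

lemma Bdd.finsetSum {ι : Type*} (s : Finset ι) {f : ι → Ω → ℝ} (hf : ∀ i ∈ s, Bdd (f i)) :
    Bdd (fun ω => ∑ i ∈ s, f i ω) := by
  classical
  induction s using Finset.induction_on with
  | empty => simpa using Bdd.const 0
  | insert _ _ hx ih =>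
    rename_i a s'
    simp only [Finset.sum_insert hx]
    exact (hf a (Finset.mem_insert_self a s')).add (ih fun i hi => hf i (Finset.mem_insert_of_mem hi))

/-- covariance as E[XY] - E[X]E[Y]. -/
lemma covar_eq (P : Measure Ω) [IsProbabilityMeasure P] {X Y : Ω → ℝ}
    (hX : Integrable X P) (hY : Integrable Y P)
    (hXY : Integrable (fun ω => X ω * Y ω) P) :
    covar P X Y = (∫ ω, X ω * Y ω ∂P) - (∫ ω, X ω ∂P) * (∫ ω, Y ω ∂P) := by
  unfold covar
  set a := ∫ ω, X ω ∂P with ha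
  set b := ∫ ω, Y ω ∂P with hb
  have hpt : ∀ ω, (X ω - a) * (Y ω - b) = (X ω * Y ω - a * Y ω) - (b * X ω - a * b) := by
    intro ω; ring
  simp_rw [hpt]
  have h1 : Integrable (fun ω => X ω * Y ω - a * Y ω) P := hXY.sub (hY.const_mul a)
  have h2 : Integrable (fun ω => b * X ω - a * b) P := (hX.const_mul b).sub (integrable_const _)
  rw [integral_sub h1 h2, integral_sub hXY (hY.const_mul a),
    integral_sub (hX.const_mul b) (integrable_const (a*b)),
    integral_const_mul, integral_const_mul, integral_const, probReal_univ]
  simp only [ENNReal.toReal_one, smul_eq_mul, one_mul, ← ha, ← hb]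
  ring



section Counting

lemma count_filter_mem (s : Finset ℕ) (K : ℕ) (hK : 1 ≤ K) (a : ℕ) (ha : a ∈ s) :
    ((s.powersetCard K).filter (fun T => a ∈ T)).card = (s.card - 1).choose (K - 1) := by
  classical
  have hbij : ((s.powersetCard K).filter (fun T => a ∈ T)).card
      = ((s.erase a).powersetCard (K - 1)).card := by
    refine Finset.card_bij' (fun T _ => T.erase a) (fun S _ => insert a S) ?_ ?_ ?_ ?_
    · intro T hT
      simp only [Finset.mem_filter, Finset.mem_powersetCard] at hT
      obtain ⟨⟨hsub, hcard⟩, haT⟩ := hT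
      simp only [Finset.mem_powersetCard]
      exact ⟨Finset.erase_subset_erase a hsub, by rw [Finset.card_erase_of_mem haT, hcard]⟩
    · intro S hS
      simp only [Finset.mem_powersetCard] at hS
      obtain ⟨hsub, hcard⟩ := hS
      have haS : a ∉ S := fun h => (Finset.mem_erase.mp (hsub h)).1 rfl
      simp only [Finset.mem_filter, Finset.mem_powersetCard]
      refine ⟨⟨Finset.insert_subset ha (hsub.trans (Finset.erase_subset a s)), ?_⟩,
        Finset.mem_insert_self a S⟩
      rw [Finset.card_insert_of_notMem haS, hcard]; omega
    · intro T hT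
      simp only [Finset.mem_filter] at hT
      exact Finset.insert_erase hT.2
    · intro S hS
      simp only [Finset.mem_powersetCard] at hS
      have haS : a ∉ S := fun h => (Finset.mem_erase.mp (hS.1 h)).1 rfl
      exact Finset.erase_insert haS
  rw [hbij, Finset.card_powersetCard, Finset.card_erase_of_mem ha]

lemma count_filter_mem_pair (s : Finset ℕ) (K : ℕ) (hK : 2 ≤ K) (a b : ℕ) (hab : a ≠ b)
    (ha : a ∈ s) (hb : b ∈ s) :
    ((s.powersetCard K).filter (fun T => a ∈ T ∧ b ∈ T)).card
      = (s.card - 2).choose (K - 2) := by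
  classical
  have hba : b ≠ a := hab.symm
  have h1 : ((s.powersetCard K).filter (fun T => a ∈ T ∧ b ∈ T)).card
      = (((s.erase a).powersetCard (K - 1)).filter (fun S => b ∈ S)).card := by
    refine Finset.card_bij' (fun T _ => T.erase a) (fun S _ => insert a S) ?_ ?_ ?_ ?_
    · intro T hT
      simp only [Finset.mem_filter, Finset.mem_powersetCard] at hT
      obtain ⟨⟨hsub, hcard⟩, haT, hbT⟩ := hT
      simp only [Finset.mem_filter, Finset.mem_powersetCard]
      exact ⟨⟨Finset.erase_subset_erase a hsub, by rw [Finset.card_erase_of_mem haT, hcard]⟩,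
        Finset.mem_erase.mpr ⟨hba, hbT⟩⟩
    · intro S hS
      simp only [Finset.mem_filter, Finset.mem_powersetCard] at hS
      obtain ⟨⟨hsub, hcard⟩, hbS⟩ := hS
      have haS : a ∉ S := fun h => (Finset.mem_erase.mp (hsub h)).1 rfl
      simp only [Finset.mem_filter, Finset.mem_powersetCard]
      refine ⟨⟨Finset.insert_subset ha (hsub.trans (Finset.erase_subset a s)), ?_⟩,
        Finset.mem_insert_self a S, Finset.mem_insert_of_mem hbS⟩
      rw [Finset.card_insert_of_notMem haS, hcard]; omega
    · intro T hT
      simp only [Finset.mem_filter] at hT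
      exact Finset.insert_erase hT.2.1
    · intro S hS
      simp only [Finset.mem_filter, Finset.mem_powersetCard] at hS
      have haS : a ∉ S := fun h => (Finset.mem_erase.mp (hS.1.1 h)).1 rfl
      exact Finset.erase_insert haS
  rw [h1, count_filter_mem (s.erase a) (K - 1) (by omega) b
    (Finset.mem_erase.mpr ⟨hba, hb⟩), Finset.card_erase_of_mem ha]
  congr 1 <;> omega

end Counting

section ZMoment

/-- Master lemma: integral of a function determined by the assignment pattern. -/
lemma zmoment (P : Measure Ω) [IsProbabilityMeasure P] (N K1 : ℕ) (hK1N : K1 ≤ N)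
    (A : ℕ → Ω → ℝ) (hAmeas : ∀ i, Measurable (A i))
    (hunif : ∀ z : ℕ → ℝ, (∀ i ∈ Finset.range N, z i = 0 ∨ z i = 1) →
      (∑ i ∈ Finset.range N, z i) = (K1 : ℝ) →
      P {ω | ∀ i ∈ Finset.range N, A i ω = z i} = ((N.choose K1 : ℝ≥0∞))⁻¹)
    (h : Ω → ℝ) (c : Finset ℕ → ℝ)
    (hc : ∀ T ∈ (Finset.range N).powersetCard K1, ∀ ω : Ω,
      (∀ i ∈ Finset.range N, A i ω = if i ∈ T then 1 else 0) → h ω = c T) :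
    ∫ ω, h ω ∂P
      = (∑ T ∈ (Finset.range N).powersetCard K1, c T) / (N.choose K1 : ℝ) := by
  classical
  set 𝒯 := (Finset.range N).powersetCard K1 with h𝒯
  set E : Finset ℕ → Set Ω :=
    fun T => {ω | ∀ i ∈ Finset.range N, A i ω = if i ∈ T then 1 else 0} with hE
  have hEmeas : ∀ T, MeasurableSet (E T) := by
    intro T
    have hrw : E T = ⋂ i ∈ Finset.range N, (A i) ⁻¹' {if i ∈ T then (1 : ℝ) else 0} := by
      ext ω; simp [hE, Set.mem_iInter]
    rw [hrw]
    exact Finset.measurableSet_biInter _ fun i _ => (hAmeas i) (measurableSet_singleton _)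
  have hchoose_pos : 0 < N.choose K1 := Nat.choose_pos hK1N
  have hPE : ∀ T ∈ 𝒯, P (E T) = ((N.choose K1 : ℝ≥0∞))⁻¹ := by
    intro T hT
    rw [h𝒯, Finset.mem_powersetCard] at hT
    apply hunif
    · intro i _; by_cases hi : i ∈ T <;> simp [hi]
    · rw [Finset.sum_ite_mem, Finset.inter_eq_right.mpr hT.1, Finset.sum_const, hT.2,
        nsmul_eq_mul, mul_one]
  have hdisj : ∀ T ∈ 𝒯, ∀ T' ∈ 𝒯, T ≠ T' → Disjoint (E T) (E T') := by
    intro T hT T' hT' hne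
    rw [h𝒯, Finset.mem_powersetCard] at hT hT'
    have hnsub : ¬ T ⊆ T' := fun hsub =>
      hne (Finset.eq_of_subset_of_card_le hsub (by rw [hT.2, hT'.2]))
    obtain ⟨x, hxT, hxT'⟩ := Finset.not_subset.mp hnsub
    have hxN : x ∈ Finset.range N := hT.1 hxT
    rw [Set.disjoint_left]
    intro ω hω hω'
    simp only [hE, Set.mem_setOf_eq] at hω hω'
    have h1 := hω x hxN
    have h2 := hω' x hxN
    rw [if_pos hxT] at h1
    rw [if_neg hxT'] at h2
    exact one_ne_zero (h1 ▸ h2)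
  have hcard : 𝒯.card = N.choose K1 := by
    rw [h𝒯, Finset.card_powersetCard, Finset.card_range]
  have hUmeas : MeasurableSet (⋃ T ∈ 𝒯, E T) :=
    𝒯.measurableSet_biUnion fun T _ => hEmeas T
  have hUnion : P (⋃ T ∈ 𝒯, E T) = 1 := by
    rw [measure_biUnion_finset (fun T hT T' hT' hne => hdisj T hT T' hT' hne)
      (fun T _ => hEmeas T)]
    rw [Finset.sum_congr rfl hPE, Finset.sum_const, hcard, nsmul_eq_mul]
    exact ENNReal.mul_inv_cancel (Nat.cast_ne_zero.mpr hchoose_pos.ne')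
      (ENNReal.natCast_ne_top _)
  have hae : ∀ᵐ ω ∂P, ω ∈ ⋃ T ∈ 𝒯, E T := by
    rw [ae_iff]
    have : {ω | ¬ ω ∈ ⋃ T ∈ 𝒯, E T} = (⋃ T ∈ 𝒯, E T)ᶜ := rfl
    rw [this]
    exact (prob_compl_eq_zero_iff hUmeas).mpr hUnion
  have heq : h =ᵐ[P] fun ω => ∑ T ∈ 𝒯, Set.indicator (E T) (fun _ => c T) ω := by
    filter_upwards [hae] with ω hω
    simp only [Set.mem_iUnion] at hω
    obtain ⟨T0, hT0, hωT0⟩ := hω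
    rw [Finset.sum_eq_single_of_mem T0 hT0]
    · rw [Set.indicator_of_mem hωT0]
      exact hc T0 hT0 ω hωT0
    · intro T hT hne
      apply Set.indicator_of_notMem
      intro hωT
      exact (Set.disjoint_left.mp (hdisj T hT T0 hT0 hne) hωT) hωT0
  rw [integral_congr_ae heq,
    integral_finset_sum _ (fun T _ => (integrable_const (c T)).indicator (hEmeas T))]
  have hterm : ∀ T ∈ 𝒯, ∫ ω, Set.indicator (E T) (fun _ => c T) ω ∂P
      = c T / (N.choose K1 : ℝ) := by
    intro T hT
    rw [integral_indicator_const _ (hEmeas T), measureReal_def, hPE T hT, smul_eq_mul,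
      ENNReal.toReal_inv, ENNReal.toReal_natCast]
    ring
  rw [Finset.sum_congr rfl hterm, ← Finset.sum_div]

lemma zmoment_one (P : Measure Ω) [IsProbabilityMeasure P] (N K1 : ℕ)
    (hK1 : 1 ≤ K1) (hK1N : K1 ≤ N)
    (A : ℕ → Ω → ℝ) (hAmeas : ∀ i, Measurable (A i))
    (hunif : ∀ z : ℕ → ℝ, (∀ i ∈ Finset.range N, z i = 0 ∨ z i = 1) →
      (∑ i ∈ Finset.range N, z i) = (K1 : ℝ) →
      P {ω | ∀ i ∈ Finset.range N, A i ω = z i} = ((N.choose K1 : ℝ≥0∞))⁻¹)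
    (i : ℕ) (hi : i ∈ Finset.range N) :
    ∫ ω, A i ω ∂P = (K1 : ℝ) / N := by
  classical
  rw [zmoment P N K1 hK1N A hAmeas hunif (A i) (fun T => if i ∈ T then 1 else 0)
    (fun T _ ω hω => hω i hi)]
  rw [Finset.sum_boole, count_filter_mem _ _ hK1 i hi, Finset.card_range]
  have hN : 1 ≤ N := le_trans hK1 hK1N
  have key : N * (N - 1).choose (K1 - 1) = N.choose K1 * K1 := by
    have h := Nat.add_one_mul_choose_eq (N - 1) (K1 - 1)
    rwa [show N - 1 + 1 = N from by omega, show K1 - 1 + 1 = K1 from by omega] at h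
  have hch : (0 : ℝ) < N.choose K1 := by
    exact_mod_cast Nat.choose_pos hK1N
  have hNpos : (0 : ℝ) < N := by exact_mod_cast hN
  rw [div_eq_div_iff hch.ne' hNpos.ne']
  have key' : (N - 1).choose (K1 - 1) * N = K1 * N.choose K1 := by
    rw [mul_comm, key, mul_comm]
  exact_mod_cast key'

lemma zmoment_two (P : Measure Ω) [IsProbabilityMeasure P] (N K1 : ℕ)
    (hK1 : 2 ≤ K1) (hK1N : K1 ≤ N)
    (A : ℕ → Ω → ℝ) (hAmeas : ∀ i, Measurable (A i))
    (hunif : ∀ z : ℕ → ℝ, (∀ i ∈ Finset.range N, z i = 0 ∨ z i = 1) →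
      (∑ i ∈ Finset.range N, z i) = (K1 : ℝ) →
      P {ω | ∀ i ∈ Finset.range N, A i ω = z i} = ((N.choose K1 : ℝ≥0∞))⁻¹)
    (i j : ℕ) (hi : i ∈ Finset.range N) (hj : j ∈ Finset.range N) (hij : i ≠ j) :
    ∫ ω, A i ω * A j ω ∂P
      = ((K1 : ℝ) * ((K1 : ℝ) - 1)) / ((N : ℝ) * ((N : ℝ) - 1)) := by
  classical
  rw [zmoment P N K1 hK1N A hAmeas hunif (fun ω => A i ω * A j ω)
    (fun T => if i ∈ T ∧ j ∈ T then 1 else 0)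
    (fun T _ ω hω => by
      show A i ω * A j ω = _
      rw [hω i hi, hω j hj]
      by_cases h1 : i ∈ T <;> by_cases h2 : j ∈ T <;> simp [h1, h2])]
  rw [Finset.sum_boole, count_filter_mem_pair _ _ hK1 i j hij hi hj, Finset.card_range]
  have hN : 2 ≤ N := le_trans hK1 hK1N
  have step1 : (N - 1) * (N - 2).choose (K1 - 2) = (N - 1).choose (K1 - 1) * (K1 - 1) := by
    have h := Nat.add_one_mul_choose_eq (N - 2) (K1 - 2)
    rwa [show N - 2 + 1 = N - 1 from by omega, show K1 - 2 + 1 = K1 - 1 from by omega] at h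
  have step2 : N * (N - 1).choose (K1 - 1) = N.choose K1 * K1 := by
    have h := Nat.add_one_mul_choose_eq (N - 1) (K1 - 1)
    rwa [show N - 1 + 1 = N from by omega, show K1 - 1 + 1 = K1 from by omega] at h
  have key : N * ((N - 1) * (N - 2).choose (K1 - 2)) = N.choose K1 * K1 * (K1 - 1) := by
    rw [step1, ← mul_assoc, step2]
  have hch : (0 : ℝ) < N.choose K1 := by exact_mod_cast Nat.choose_pos hK1N
  have hNpos : (0 : ℝ) < (N : ℝ) * ((N : ℝ) - 1) := by
    have h1 : (2 : ℝ) ≤ (N : ℝ) := by exact_mod_cast hN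
    nlinarith
  rw [div_eq_div_iff hch.ne' hNpos.ne']
  have hcast1 : ((K1 - 1 : ℕ) : ℝ) = (K1 : ℝ) - 1 := by
    have : 1 ≤ K1 := by omega
    push_cast [this]; ring
  have hcast2 : ((N - 1 : ℕ) : ℝ) = (N : ℝ) - 1 := by
    have : 1 ≤ N := by omega
    push_cast [this]; ring
  have keyR : ((N : ℝ)) * (((N : ℝ) - 1) * ((N - 2).choose (K1 - 2) : ℝ))
      = (N.choose K1 : ℝ) * (K1 : ℝ) * ((K1 : ℝ) - 1) := by
    rw [← hcast1, ← hcast2]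
    exact_mod_cast key
  nlinarith [keyR]

end ZMoment



section SiteCov

set_option maxHeartbeats 2000000 in
/-- Workhorse: covariance identity for a single site. -/
lemma site_cov (P : Measure Ω) [IsProbabilityMeasure P] {β : Type*} [MeasurableSpace β]
    (N K1 : ℕ) (hK1 : 2 ≤ K1) (hKN : K1 + 2 ≤ N)
    (A : ℕ → Ω → ℝ) (hAmeas : ∀ i, Measurable (A i))
    (hA01 : ∀ i ω, A i ω = 0 ∨ A i ω = 1)
    (hunif : ∀ z : ℕ → ℝ, (∀ i ∈ Finset.range N, z i = 0 ∨ z i = 1) →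
      (∑ i ∈ Finset.range N, z i) = (K1 : ℝ) →
      P {ω | ∀ i ∈ Finset.range N, A i ω = z i} = ((N.choose K1 : ℝ≥0∞))⁻¹)
    (Wf : ℕ → Ω → β) (hWm : ∀ i, Measurable (Wf i))
    (hiid : iIndepFun Wf P)
    (hident : ∀ i, IdentDistrib (Wf i) (Wf 0) P P)
    (hindep : IndepFun (fun ω i => Wf i ω) (fun ω i => A i ω) P)
    (ξm1 ξm0 ξy1 ξy0 : β → ℝ)
    (hm1 : Measurable ξm1) (hm0 : Measurable ξm0)
    (hy1 : Measurable ξy1) (hy0 : Measurable ξy0)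
    (hbm1 : ∀ i, Bdd (fun ω => ξm1 (Wf i ω))) (hbm0 : ∀ i, Bdd (fun ω => ξm0 (Wf i ω)))
    (hby1 : ∀ i, Bdd (fun ω => ξy1 (Wf i ω))) (hby0 : ∀ i, Bdd (fun ω => ξy0 (Wf i ω))) :
    covar P
      (fun ω => (∑ i ∈ Finset.range N, A i ω * ξm1 (Wf i ω)) / (K1 : ℝ)
        - (∑ i ∈ Finset.range N, (1 - A i ω) * ξm0 (Wf i ω)) / ((N - K1 : ℕ) : ℝ))
      (fun ω => (∑ i ∈ Finset.range N, A i ω * ξy1 (Wf i ω)) / (K1 : ℝ)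
        - (∑ i ∈ Finset.range N, (1 - A i ω) * ξy0 (Wf i ω)) / ((N - K1 : ℕ) : ℝ))
    = covar P (fun ω => ξm0 (Wf 0 ω)) (fun ω => ξy0 (Wf 0 ω)) / ((N - K1 : ℕ) : ℝ)
      + covar P (fun ω => ξm1 (Wf 0 ω)) (fun ω => ξy1 (Wf 0 ω)) / (K1 : ℝ) := by
  classical
  set r1 : ℝ := (K1 : ℝ) with hr1def
  set r0 : ℝ := ((N - K1 : ℕ) : ℝ) with hr0def
  set rN : ℝ := (N : ℝ) with hrNdef
  have hr1ge : (2 : ℝ) ≤ r1 := by rw [hr1def]; exact_mod_cast hK1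
  have hr0ge : (2 : ℝ) ≤ r0 := by rw [hr0def]; exact_mod_cast (by omega : 2 ≤ N - K1)
  have hr1pos : (0 : ℝ) < r1 := by linarith
  have hr0pos : (0 : ℝ) < r0 := by linarith
  have hrN : rN = r1 + r0 := by
    rw [hrNdef, hr1def, hr0def]
    have : ((N - K1 : ℕ) : ℝ) = (N : ℝ) - (K1 : ℝ) := by
      push_cast [Nat.cast_sub (by omega : K1 ≤ N)]; ring
    rw [this]; ring
  have hNcast : ((N - 1 : ℕ) : ℝ) = rN - 1 := by
    rw [hrNdef]; push_cast [Nat.cast_sub (by omega : 1 ≤ N)]; ring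
  -- boundedness of A
  have hBA : ∀ i, Bdd (A i) := fun i =>
    ⟨hAmeas i, 1, fun ω => by rcases hA01 i ω with h | h <;> simp [h]⟩
  -- Z-moments
  set p1 : ℝ := r1 / rN with hp1def
  set p11 : ℝ := r1 * (r1 - 1) / (rN * (rN - 1)) with hp11def
  have hp1 : ∀ i ∈ Finset.range N, ∫ ω, A i ω ∂P = p1 :=
    fun i hi => zmoment_one P N K1 (by omega) (by omega) A hAmeas hunif i hi
  have hp11 : ∀ i ∈ Finset.range N, ∀ j ∈ Finset.range N, i ≠ j →
      ∫ ω, A i ω * A j ω ∂P = p11 :=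
    fun i hi j hj hij => zmoment_two P N K1 hK1 (by omega) A hAmeas hunif i j hi hj hij
  -- master factorization between the Z-vector and W-vector
  have master : ∀ (φ : (ℕ → ℝ) → ℝ) (ψ : (ℕ → β) → ℝ) (X Y : Ω → ℝ),
      Measurable φ → Measurable ψ →
      X = (fun ω => φ (fun i => A i ω)) → Y = (fun ω => ψ (fun i => Wf i ω)) →
      Bdd X → Bdd Y →
      ∫ ω, X ω * Y ω ∂P = (∫ ω, X ω ∂P) * (∫ ω, Y ω ∂P) := by
    intro φ ψ X Y hφ hψ hX hY hbX hbY
    have hindXY : IndepFun Y X P := by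
      rw [hX, hY]
      exact hindep.comp hψ hφ
    have h : ∫ ω, Y ω * X ω ∂P = (∫ ω, Y ω ∂P) * ∫ ω, X ω ∂P :=
      hindXY.integral_fun_mul_eq_mul_integral (hbY.integrable P).aestronglyMeasurable (hbX.integrable P).aestronglyMeasurable
    have hcomm : (fun ω => X ω * Y ω) = fun ω => Y ω * X ω := by funext ω; ring
    rw [show ∫ ω, X ω * Y ω ∂P = ∫ ω, Y ω * X ω ∂P from by rw [hcomm], h]
    ring
  -- identical distribution across units
  have wident2 : ∀ (ξ η : β → ℝ), Measurable ξ → Measurable η → ∀ i,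
      ∫ ω, ξ (Wf i ω) * η (Wf i ω) ∂P = ∫ ω, ξ (Wf 0 ω) * η (Wf 0 ω) ∂P := by
    intro ξ η hξ hη i
    exact (show IdentDistrib (fun ω => ξ (Wf i ω) * η (Wf i ω))
      (fun ω => ξ (Wf 0 ω) * η (Wf 0 ω)) P P from (hident i).comp (hξ.mul hη)).integral_eq
  have wident1 : ∀ (ξ : β → ℝ), Measurable ξ → ∀ i,
      ∫ ω, ξ (Wf i ω) ∂P = ∫ ω, ξ (Wf 0 ω) ∂P := by
    intro ξ hξ i
    exact (show IdentDistrib (fun ω => ξ (Wf i ω)) (fun ω => ξ (Wf 0 ω)) P P from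
      (hident i).comp hξ).integral_eq
  -- cross-unit factorization
  have wfact : ∀ (ξ η : β → ℝ), Measurable ξ → Measurable η →
      (∀ l, Bdd (fun ω => ξ (Wf l ω))) → (∀ l, Bdd (fun ω => η (Wf l ω))) →
      ∀ i j, i ≠ j →
      ∫ ω, ξ (Wf i ω) * η (Wf j ω) ∂P
        = (∫ ω, ξ (Wf 0 ω) ∂P) * ∫ ω, η (Wf 0 ω) ∂P := by
    intro ξ η hξ hη hbξ hbη i j hij
    have hind : IndepFun (fun ω => ξ (Wf i ω)) (fun ω => η (Wf j ω)) P :=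
      (hiid.indepFun hij).comp hξ hη
    have h : ∫ ω, ξ (Wf i ω) * η (Wf j ω) ∂P
        = (∫ ω, ξ (Wf i ω) ∂P) * ∫ ω, η (Wf j ω) ∂P :=
      hind.integral_fun_mul_eq_mul_integral ((hbξ i).integrable P).aestronglyMeasurable ((hbη j).integrable P).aestronglyMeasurable
    rw [h, wident1 ξ hξ i, wident1 η hη j]
  -- the combined coordinates
  set pum : β → ℝ := fun w => ξm1 w / r1 + ξm0 w / r0 with hpum
  set pvm : β → ℝ := fun w => ξm0 w / r0 with hpvm
  set puy : β → ℝ := fun w => ξy1 w / r1 + ξy0 w / r0 with hpuy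
  set pvy : β → ℝ := fun w => ξy0 w / r0 with hpvy
  have hpum_m : Measurable pum := by rw [hpum]; exact (hm1.div_const _).add (hm0.div_const _)
  have hpvm_m : Measurable pvm := by rw [hpvm]; exact hm0.div_const _
  have hpuy_m : Measurable puy := by rw [hpuy]; exact (hy1.div_const _).add (hy0.div_const _)
  have hpvy_m : Measurable pvy := by rw [hpvy]; exact hy0.div_const _
  have hbpum : ∀ i, Bdd (fun ω => pum (Wf i ω)) := by
    intro i; simp only [hpum]
    exact ((hbm1 i).div_const _).add ((hbm0 i).div_const _)
  have hbpvm : ∀ i, Bdd (fun ω => pvm (Wf i ω)) := by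
    intro i; simp only [hpvm]; exact (hbm0 i).div_const _
  have hbpuy : ∀ i, Bdd (fun ω => puy (Wf i ω)) := by
    intro i; simp only [hpuy]
    exact ((hby1 i).div_const _).add ((hby0 i).div_const _)
  have hbpvy : ∀ i, Bdd (fun ω => pvy (Wf i ω)) := by
    intro i; simp only [hpvy]; exact (hby0 i).div_const _
  -- expectations of the combined coordinates
  set Eu : ℝ := ∫ ω, pum (Wf 0 ω) ∂P with hEu
  set Ev : ℝ := ∫ ω, pvm (Wf 0 ω) ∂P with hEv
  set Ew : ℝ := ∫ ω, puy (Wf 0 ω) ∂P with hEw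
  set Ex : ℝ := ∫ ω, pvy (Wf 0 ω) ∂P with hEx
  set Duw : ℝ := ∫ ω, pum (Wf 0 ω) * puy (Wf 0 ω) ∂P with hDuw
  set Dux : ℝ := ∫ ω, pum (Wf 0 ω) * pvy (Wf 0 ω) ∂P with hDux
  set Dvw : ℝ := ∫ ω, pvm (Wf 0 ω) * puy (Wf 0 ω) ∂P with hDvw
  set Dvx : ℝ := ∫ ω, pvm (Wf 0 ω) * pvy (Wf 0 ω) ∂P with hDvx
  -- the summands
  set f : ℕ → Ω → ℝ := fun i ω => A i ω * pum (Wf i ω) - pvm (Wf i ω) with hfdef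
  set g : ℕ → Ω → ℝ := fun j ω => A j ω * puy (Wf j ω) - pvy (Wf j ω) with hgdef
  have hbf : ∀ i, Bdd (f i) := by
    intro i; simp only [hfdef]; exact ((hBA i).mul (hbpum i)).sub (hbpvm i)
  have hbg : ∀ j, Bdd (g j) := by
    intro j; simp only [hgdef]; exact ((hBA j).mul (hbpuy j)).sub (hbpvy j)
  -- single-unit base integrals
  have hbase_single1 : ∀ (ξ : β → ℝ), Measurable ξ → (∀ l, Bdd (fun ω => ξ (Wf l ω))) →
      ∀ i ∈ Finset.range N,
      ∫ ω, A i ω * ξ (Wf i ω) ∂P = p1 * ∫ ω, ξ (Wf 0 ω) ∂P := by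
    intro ξ hξ hbξ i hi
    rw [master (fun v => v i) (fun w => ξ (w i)) (A i) (fun ω => ξ (Wf i ω))
      (measurable_pi_apply i) (hξ.comp (measurable_pi_apply i)) rfl rfl (hBA i) (hbξ i),
      hp1 i hi, wident1 ξ hξ i]
  have hint_f : ∀ i ∈ Finset.range N, ∫ ω, f i ω ∂P = p1 * Eu - Ev := by
    intro i hi
    simp only [hfdef]
    rw [integral_sub (((hBA i).mul (hbpum i)).integrable P) ((hbpvm i).integrable P),
      hbase_single1 pum hpum_m hbpum i hi, wident1 pvm hpvm_m i]
  have hint_g : ∀ j ∈ Finset.range N, ∫ ω, g j ω ∂P = p1 * Ew - Ex := by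
    intro j hj
    simp only [hgdef]
    rw [integral_sub (((hBA j).mul (hbpuy j)).integrable P) ((hbpvy j).integrable P),
      hbase_single1 puy hpuy_m hbpuy j hj, wident1 pvy hpvy_m j]
  -- off-diagonal term
  set Coff : ℝ := p11 * (Eu * Ew) - p1 * (Eu * Ex) - p1 * (Ev * Ew) + Ev * Ex with hCoff
  have hoff : ∀ i ∈ Finset.range N, ∀ j ∈ Finset.range N, i ≠ j →
      ∫ ω, f i ω * g j ω ∂P = Coff := by
    intro i hi j hj hij
    have hpt : ∀ ω, f i ω * g j ω
        = (A i ω * A j ω) * (pum (Wf i ω) * puy (Wf j ω))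
          - A i ω * (pum (Wf i ω) * pvy (Wf j ω))
          - A j ω * (pvm (Wf i ω) * puy (Wf j ω))
          + pvm (Wf i ω) * pvy (Wf j ω) := by
      intro ω; simp only [hfdef, hgdef]; ring
    simp_rw [hpt]
    have hb1 : Bdd (fun ω => (A i ω * A j ω) * (pum (Wf i ω) * puy (Wf j ω))) :=
      ((hBA i).mul (hBA j)).mul ((hbpum i).mul (hbpuy j))
    have hb2 : Bdd (fun ω => A i ω * (pum (Wf i ω) * pvy (Wf j ω))) :=
      (hBA i).mul ((hbpum i).mul (hbpvy j))
    have hb3 : Bdd (fun ω => A j ω * (pvm (Wf i ω) * puy (Wf j ω))) :=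
      (hBA j).mul ((hbpvm i).mul (hbpuy j))
    have hb4 : Bdd (fun ω => pvm (Wf i ω) * pvy (Wf j ω)) := (hbpvm i).mul (hbpvy j)
    rw [integral_add (((hb1.sub hb2).sub hb3).integrable P) (hb4.integrable P),
      integral_sub ((hb1.sub hb2).integrable P) (hb3.integrable P),
      integral_sub (hb1.integrable P) (hb2.integrable P)]
    rw [master (fun v => v i * v j) (fun w => pum (w i) * puy (w j))
        (fun ω => A i ω * A j ω) (fun ω => pum (Wf i ω) * puy (Wf j ω))
        ((measurable_pi_apply i).mul (measurable_pi_apply j))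
        ((hpum_m.comp (measurable_pi_apply i)).mul (hpuy_m.comp (measurable_pi_apply j)))
        rfl rfl ((hBA i).mul (hBA j)) ((hbpum i).mul (hbpuy j)),
      master (fun v => v i) (fun w => pum (w i) * pvy (w j))
        (A i) (fun ω => pum (Wf i ω) * pvy (Wf j ω))
        (measurable_pi_apply i)
        ((hpum_m.comp (measurable_pi_apply i)).mul (hpvy_m.comp (measurable_pi_apply j)))
        rfl rfl (hBA i) ((hbpum i).mul (hbpvy j)),
      master (fun v => v j) (fun w => pvm (w i) * puy (w j))
        (A j) (fun ω => pvm (Wf i ω) * puy (Wf j ω))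
        (measurable_pi_apply j)
        ((hpvm_m.comp (measurable_pi_apply i)).mul (hpuy_m.comp (measurable_pi_apply j)))
        rfl rfl (hBA j) ((hbpvm i).mul (hbpuy j))]
    rw [hp11 i hi j hj hij, hp1 i hi, hp1 j hj,
      wfact pum puy hpum_m hpuy_m hbpum hbpuy i j hij,
      wfact pum pvy hpum_m hpvy_m hbpum hbpvy i j hij,
      wfact pvm puy hpvm_m hpuy_m hbpvm hbpuy i j hij,
      wfact pvm pvy hpvm_m hpvy_m hbpvm hbpvy i j hij]
  -- diagonal term
  set Cdiag : ℝ := p1 * Duw - p1 * Dux - p1 * Dvw + Dvx with hCdiag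
  have hdiag : ∀ i ∈ Finset.range N, ∫ ω, f i ω * g i ω ∂P = Cdiag := by
    intro i hi
    have hpt : ∀ ω, f i ω * g i ω
        = A i ω * (pum (Wf i ω) * puy (Wf i ω))
          - A i ω * (pum (Wf i ω) * pvy (Wf i ω))
          - A i ω * (pvm (Wf i ω) * puy (Wf i ω))
          + pvm (Wf i ω) * pvy (Wf i ω) := by
      intro ω
      rcases hA01 i ω with h | h <;> simp only [hfdef, hgdef, h] <;> ring
    simp_rw [hpt]
    have hb1 : Bdd (fun ω => A i ω * (pum (Wf i ω) * puy (Wf i ω))) :=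
      (hBA i).mul ((hbpum i).mul (hbpuy i))
    have hb2 : Bdd (fun ω => A i ω * (pum (Wf i ω) * pvy (Wf i ω))) :=
      (hBA i).mul ((hbpum i).mul (hbpvy i))
    have hb3 : Bdd (fun ω => A i ω * (pvm (Wf i ω) * puy (Wf i ω))) :=
      (hBA i).mul ((hbpvm i).mul (hbpuy i))
    have hb4 : Bdd (fun ω => pvm (Wf i ω) * pvy (Wf i ω)) := (hbpvm i).mul (hbpvy i)
    rw [integral_add (((hb1.sub hb2).sub hb3).integrable P) (hb4.integrable P),
      integral_sub ((hb1.sub hb2).integrable P) (hb3.integrable P),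
      integral_sub (hb1.integrable P) (hb2.integrable P)]
    rw [master (fun v => v i) (fun w => pum (w i) * puy (w i))
        (A i) (fun ω => pum (Wf i ω) * puy (Wf i ω))
        (measurable_pi_apply i)
        ((hpum_m.comp (measurable_pi_apply i)).mul (hpuy_m.comp (measurable_pi_apply i)))
        rfl rfl (hBA i) ((hbpum i).mul (hbpuy i)),
      master (fun v => v i) (fun w => pum (w i) * pvy (w i))
        (A i) (fun ω => pum (Wf i ω) * pvy (Wf i ω))
        (measurable_pi_apply i)
        ((hpum_m.comp (measurable_pi_apply i)).mul (hpvy_m.comp (measurable_pi_apply i)))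
        rfl rfl (hBA i) ((hbpum i).mul (hbpvy i)),
      master (fun v => v i) (fun w => pvm (w i) * puy (w i))
        (A i) (fun ω => pvm (Wf i ω) * puy (Wf i ω))
        (measurable_pi_apply i)
        ((hpvm_m.comp (measurable_pi_apply i)).mul (hpuy_m.comp (measurable_pi_apply i)))
        rfl rfl (hBA i) ((hbpvm i).mul (hbpuy i))]
    rw [hp1 i hi,
      wident2 pum puy hpum_m hpuy_m i, wident2 pum pvy hpum_m hpvy_m i,
      wident2 pvm puy hpvm_m hpuy_m i, wident2 pvm pvy hpvm_m hpvy_m i]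
  -- sums
  have hFsum : ∫ ω, (∑ i ∈ Finset.range N, f i ω) ∂P = rN * (p1 * Eu - Ev) := by
    rw [integral_finset_sum _ (fun i _ => (hbf i).integrable P),
      Finset.sum_congr rfl hint_f, Finset.sum_const, Finset.card_range, nsmul_eq_mul, hrNdef]
  have hGsum : ∫ ω, (∑ j ∈ Finset.range N, g j ω) ∂P = rN * (p1 * Ew - Ex) := by
    rw [integral_finset_sum _ (fun j _ => (hbg j).integrable P),
      Finset.sum_congr rfl hint_g, Finset.sum_const, Finset.card_range, nsmul_eq_mul, hrNdef]
  have hFGsum : ∫ ω, (∑ i ∈ Finset.range N, f i ω) * (∑ j ∈ Finset.range N, g j ω) ∂P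
      = rN * (Cdiag + (rN - 1) * Coff) := by
    have hpt : ∀ ω, (∑ i ∈ Finset.range N, f i ω) * (∑ j ∈ Finset.range N, g j ω)
        = ∑ i ∈ Finset.range N, ∑ j ∈ Finset.range N, f i ω * g j ω := by
      intro ω; rw [Finset.sum_mul_sum]
    simp_rw [hpt]
    rw [integral_finset_sum _ (fun i _ =>
      (Bdd.finsetSum (Finset.range N) (fun j _ => (hbf i).mul (hbg j))).integrable P)]
    have hinner : ∀ i ∈ Finset.range N,
        ∫ ω, (∑ j ∈ Finset.range N, f i ω * g j ω) ∂P = Cdiag + (rN - 1) * Coff := by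
      intro i hi
      rw [integral_finset_sum _ (fun j _ => ((hbf i).mul (hbg j)).integrable P)]
      rw [← Finset.add_sum_erase _ _ hi, hdiag i hi]
      have : ∀ j ∈ (Finset.range N).erase i, ∫ ω, f i ω * g j ω ∂P = Coff := by
        intro j hj
        have hji := Finset.mem_erase.mp hj
        exact hoff i hi j hji.2 (fun h => hji.1 h.symm)
      rw [Finset.sum_congr rfl this, Finset.sum_const, Finset.card_erase_of_mem hi,
        Finset.card_range, nsmul_eq_mul, hNcast]
    rw [Finset.sum_congr rfl hinner, Finset.sum_const, Finset.card_range, nsmul_eq_mul, hrNdef]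
  -- expectations in terms of the base coordinates
  set a : ℝ := ∫ ω, ξm1 (Wf 0 ω) ∂P with ha
  set b : ℝ := ∫ ω, ξm0 (Wf 0 ω) ∂P with hb
  set c : ℝ := ∫ ω, ξy1 (Wf 0 ω) ∂P with hc
  set d : ℝ := ∫ ω, ξy0 (Wf 0 ω) ∂P with hd
  set e1 : ℝ := ∫ ω, ξm1 (Wf 0 ω) * ξy1 (Wf 0 ω) ∂P with he1
  set e0 : ℝ := ∫ ω, ξm0 (Wf 0 ω) * ξy0 (Wf 0 ω) ∂P with he0
  set q10 : ℝ := ∫ ω, ξm1 (Wf 0 ω) * ξy0 (Wf 0 ω) ∂P with hq10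
  set q01 : ℝ := ∫ ω, ξm0 (Wf 0 ω) * ξy1 (Wf 0 ω) ∂P with hq01
  have hEuv : Eu = a / r1 + b / r0 := by
    rw [hEu]; simp only [hpum]
    rw [integral_add (((hbm1 0).div_const _).integrable P) (((hbm0 0).div_const _).integrable P),
      integral_div, integral_div, ha, hb]
  have hEvv : Ev = b / r0 := by
    rw [hEv]; simp only [hpvm]; rw [integral_div, hb]
  have hEwv : Ew = c / r1 + d / r0 := by
    rw [hEw]; simp only [hpuy]
    rw [integral_add (((hby1 0).div_const _).integrable P) (((hby0 0).div_const _).integrable P),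
      integral_div, integral_div, hc, hd]
  have hExv : Ex = d / r0 := by
    rw [hEx]; simp only [hpvy]; rw [integral_div, hd]
  have hDuwv : Duw = e1 / (r1 * r1) + q10 / (r1 * r0) + q01 / (r0 * r1) + e0 / (r0 * r0) := by
    rw [hDuw]; simp only [hpum, hpuy]
    have hpt : ∀ ω, (ξm1 (Wf 0 ω) / r1 + ξm0 (Wf 0 ω) / r0)
          * (ξy1 (Wf 0 ω) / r1 + ξy0 (Wf 0 ω) / r0)
        = (ξm1 (Wf 0 ω) * ξy1 (Wf 0 ω)) / (r1 * r1)
          + (ξm1 (Wf 0 ω) * ξy0 (Wf 0 ω)) / (r1 * r0)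
          + (ξm0 (Wf 0 ω) * ξy1 (Wf 0 ω)) / (r0 * r1)
          + (ξm0 (Wf 0 ω) * ξy0 (Wf 0 ω)) / (r0 * r0) := by
      intro ω; field_simp; ring
    simp_rw [hpt]
    have i1 : Integrable (fun ω => (ξm1 (Wf 0 ω) * ξy1 (Wf 0 ω)) / (r1 * r1)) P :=
      (((hbm1 0).mul (hby1 0)).div_const _).integrable P
    have i2 : Integrable (fun ω => (ξm1 (Wf 0 ω) * ξy0 (Wf 0 ω)) / (r1 * r0)) P :=
      (((hbm1 0).mul (hby0 0)).div_const _).integrable P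
    have i3 : Integrable (fun ω => (ξm0 (Wf 0 ω) * ξy1 (Wf 0 ω)) / (r0 * r1)) P :=
      (((hbm0 0).mul (hby1 0)).div_const _).integrable P
    have i4 : Integrable (fun ω => (ξm0 (Wf 0 ω) * ξy0 (Wf 0 ω)) / (r0 * r0)) P :=
      (((hbm0 0).mul (hby0 0)).div_const _).integrable P
    have i12 : Integrable (fun ω => (ξm1 (Wf 0 ω) * ξy1 (Wf 0 ω)) / (r1 * r1)
        + (ξm1 (Wf 0 ω) * ξy0 (Wf 0 ω)) / (r1 * r0)) P := i1.add i2
    have i123 : Integrable (fun ω => (ξm1 (Wf 0 ω) * ξy1 (Wf 0 ω)) / (r1 * r1)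
        + (ξm1 (Wf 0 ω) * ξy0 (Wf 0 ω)) / (r1 * r0)
        + (ξm0 (Wf 0 ω) * ξy1 (Wf 0 ω)) / (r0 * r1)) P := i12.add i3
    rw [integral_add i123 i4, integral_add i12 i3, integral_add i1 i2,
      integral_div, integral_div, integral_div, integral_div]
  have hDuxv : Dux = q10 / (r1 * r0) + e0 / (r0 * r0) := by
    rw [hDux]; simp only [hpum, hpvy]
    have hpt : ∀ ω, (ξm1 (Wf 0 ω) / r1 + ξm0 (Wf 0 ω) / r0) * (ξy0 (Wf 0 ω) / r0)
        = (ξm1 (Wf 0 ω) * ξy0 (Wf 0 ω)) / (r1 * r0)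
          + (ξm0 (Wf 0 ω) * ξy0 (Wf 0 ω)) / (r0 * r0) := by
      intro ω; field_simp
    simp_rw [hpt]
    have i2 : Integrable (fun ω => (ξm1 (Wf 0 ω) * ξy0 (Wf 0 ω)) / (r1 * r0)) P :=
      (((hbm1 0).mul (hby0 0)).div_const _).integrable P
    have i4 : Integrable (fun ω => (ξm0 (Wf 0 ω) * ξy0 (Wf 0 ω)) / (r0 * r0)) P :=
      (((hbm0 0).mul (hby0 0)).div_const _).integrable P
    rw [integral_add i2 i4, integral_div, integral_div]
  have hDvwv : Dvw = q01 / (r0 * r1) + e0 / (r0 * r0) := by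
    rw [hDvw]; simp only [hpvm, hpuy]
    have hpt : ∀ ω, (ξm0 (Wf 0 ω) / r0) * (ξy1 (Wf 0 ω) / r1 + ξy0 (Wf 0 ω) / r0)
        = (ξm0 (Wf 0 ω) * ξy1 (Wf 0 ω)) / (r0 * r1)
          + (ξm0 (Wf 0 ω) * ξy0 (Wf 0 ω)) / (r0 * r0) := by
      intro ω; field_simp
    simp_rw [hpt]
    have i3 : Integrable (fun ω => (ξm0 (Wf 0 ω) * ξy1 (Wf 0 ω)) / (r0 * r1)) P :=
      (((hbm0 0).mul (hby1 0)).div_const _).integrable P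
    have i4 : Integrable (fun ω => (ξm0 (Wf 0 ω) * ξy0 (Wf 0 ω)) / (r0 * r0)) P :=
      (((hbm0 0).mul (hby0 0)).div_const _).integrable P
    rw [integral_add i3 i4, integral_div, integral_div]
  have hDvxv : Dvx = e0 / (r0 * r0) := by
    rw [hDvx]; simp only [hpvm, hpvy]
    have hpt : ∀ ω, (ξm0 (Wf 0 ω) / r0) * (ξy0 (Wf 0 ω) / r0)
        = (ξm0 (Wf 0 ω) * ξy0 (Wf 0 ω)) / (r0 * r0) := by
      intro ω; field_simp
    simp_rw [hpt]
    rw [integral_div]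
  -- rewrite the LHS covariance
  have hFform : (fun ω => (∑ i ∈ Finset.range N, A i ω * ξm1 (Wf i ω)) / (K1 : ℝ)
        - (∑ i ∈ Finset.range N, (1 - A i ω) * ξm0 (Wf i ω)) / ((N - K1 : ℕ) : ℝ))
      = fun ω => ∑ i ∈ Finset.range N, f i ω := by
    funext ω
    rw [Finset.sum_div, Finset.sum_div, ← Finset.sum_sub_distrib]
    apply Finset.sum_congr rfl
    intro i _
    simp only [hfdef, hpum, hpvm, ← hr1def, ← hr0def]
    ring
  have hGform : (fun ω => (∑ i ∈ Finset.range N, A i ω * ξy1 (Wf i ω)) / (K1 : ℝ)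
        - (∑ i ∈ Finset.range N, (1 - A i ω) * ξy0 (Wf i ω)) / ((N - K1 : ℕ) : ℝ))
      = fun ω => ∑ j ∈ Finset.range N, g j ω := by
    funext ω
    rw [Finset.sum_div, Finset.sum_div, ← Finset.sum_sub_distrib]
    apply Finset.sum_congr rfl
    intro j _
    simp only [hgdef, hpuy, hpvy, ← hr1def, ← hr0def]
    ring
  rw [hFform, hGform]
  have hbF : Bdd (fun ω => ∑ i ∈ Finset.range N, f i ω) :=
    Bdd.finsetSum _ (fun i _ => hbf i)
  have hbG : Bdd (fun ω => ∑ j ∈ Finset.range N, g j ω) :=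
    Bdd.finsetSum _ (fun j _ => hbg j)
  rw [covar_eq P (hbF.integrable P) (hbG.integrable P) ((hbF.mul hbG).integrable P)]
  rw [covar_eq P ((hbm0 0).integrable P) ((hby0 0).integrable P)
      (((hbm0 0).mul (hby0 0)).integrable P),
    covar_eq P ((hbm1 0).integrable P) ((hby1 0).integrable P)
      (((hbm1 0).mul (hby1 0)).integrable P)]
  rw [hFGsum, hFsum, hGsum]
  rw [hCdiag, hCoff, hDuwv, hDuxv, hDvwv, hDvxv, hEuv, hEvv, hEwv, hExv,
    hp11def, hp1def, ← ha, ← hb, ← hc, ← hd, ← he1, ← he0]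
  rw [hrN]
  have h1 : r1 + r0 ≠ 0 := by linarith
  have h2 : r1 + r0 - 1 ≠ 0 := by linarith
  field_simp
  ring

end SiteCov


/-- the covariance between the mediator-ITT and outcome-ITT estimators of a
site equals the sum of the arm-specific population covariances divided by arm sizes. -/
theorem statement10
    {Ω : Type*} [MeasurableSpace Ω] (P : Measure Ω) [IsProbabilityMeasure P]
    (K : ℕ) (n n1 : ℕ → ℕ) (Z Y0 Y1 : ℕ → ℕ → Ω → ℝ) (M0 M1 : ℕ → ℕ → Ω → Fin K → ℝ)
    (hmeas : ∀ s i, Measurable (Z s i) ∧ Measurable (Y0 s i) ∧ Measurable (Y1 s i)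
      ∧ Measurable (M0 s i) ∧ Measurable (M1 s i))
    (hZ01 : ∀ s i ω, Z s i ω = 0 ∨ Z s i ω = 1)
    (hbd : ∃ C : ℝ, ∀ s i ω, |Y0 s i ω| ≤ C ∧ |Y1 s i ω| ≤ C
      ∧ ∀ k, |M0 s i ω k| ≤ C ∧ |M1 s i ω k| ≤ C)
    (hA1 : Assumption1 P n n1 Z)
    (hA2 : Assumption2 P (fun s i ω => (Y0 s i ω, Y1 s i ω, M0 s i ω, M1 s i ω)) Z)
    (Mk0 Mk1 : Fin K → ℕ → ℕ → Ω → ℝ)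
    (hMk0 : ∀ k s i ω, Mk0 k s i ω = M0 s i ω k)
    (hMk1 : ∀ k s i ω, Mk1 k s i ω = M1 s i ω k)
    :
    ∀ (s : ℕ) (k : Fin K),
      covar P (itthat n n1 Z (obs Z (Mk0 k) (Mk1 k)) s) (itthat n n1 Z (obs Z Y0 Y1) s)
        = covar P (fun ω => M0 s 0 ω k) (fun ω => Y0 s 0 ω) / ((n s - n1 s : ℕ) : ℝ)
          + covar P (fun ω => M1 s 0 ω k) (fun ω => Y1 s 0 ω) / (n1 s : ℝ) := by
  intro s k
  obtain ⟨hK1ge, hKN, hunif⟩ := hA1 s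
  obtain ⟨C, hC⟩ := hbd
  set Wf : ℕ → Ω → ℝ × ℝ × (Fin K → ℝ) × (Fin K → ℝ) :=
    fun i ω => (Y0 s i ω, Y1 s i ω, M0 s i ω, M1 s i ω) with hWf
  have hWm : ∀ i : ℕ, Measurable (Wf i) := by
    intro i
    simp only [hWf]
    exact ((hmeas s i).2.1).prodMk (((hmeas s i).2.2.1).prodMk
      (((hmeas s i).2.2.2.1).prodMk ((hmeas s i).2.2.2.2)))
  have hFeq : itthat n n1 Z (obs Z (Mk0 k) (Mk1 k)) s
      = fun ω => (∑ i ∈ Finset.range (n s),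
            Z s i ω * (fun w : ℝ × ℝ × (Fin K → ℝ) × (Fin K → ℝ) => w.2.2.2 k) (Wf i ω))
              / ((n1 s : ℝ))
          - (∑ i ∈ Finset.range (n s),
            (1 - Z s i ω) * (fun w : ℝ × ℝ × (Fin K → ℝ) × (Fin K → ℝ) => w.2.2.1 k) (Wf i ω))
              / ((n s - n1 s : ℕ) : ℝ) := by
    funext ω
    simp only [itthat, mean1, mean0, obs, hWf]
    congr 1
    · congr 1
      apply Finset.sum_congr rfl
      intro i _
      rcases hZ01 s i ω with h | h <;> simp [h, hMk1, hMk0]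
    · congr 1
      apply Finset.sum_congr rfl
      intro i _
      rcases hZ01 s i ω with h | h <;> simp [h, hMk1, hMk0]
  have hGeq : itthat n n1 Z (obs Z Y0 Y1) s
      = fun ω => (∑ i ∈ Finset.range (n s),
            Z s i ω * (fun w : ℝ × ℝ × (Fin K → ℝ) × (Fin K → ℝ) => w.2.1) (Wf i ω))
              / ((n1 s : ℝ))
          - (∑ i ∈ Finset.range (n s),
            (1 - Z s i ω) * (fun w : ℝ × ℝ × (Fin K → ℝ) × (Fin K → ℝ) => w.1) (Wf i ω))
              / ((n s - n1 s : ℕ) : ℝ) := by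
    funext ω
    simp only [itthat, mean1, mean0, obs, hWf]
    congr 1
    · congr 1
      apply Finset.sum_congr rfl
      intro i _
      rcases hZ01 s i ω with h | h <;> simp [h]
    · congr 1
      apply Finset.sum_congr rfl
      intro i _
      rcases hZ01 s i ω with h | h <;> simp [h]
  rw [hFeq, hGeq]
  exact site_cov P (n s) (n1 s) hK1ge hKN (Z s) (fun i => (hmeas s i).1) (hZ01 s) hunif
    Wf hWm (hA2.1 s) (fun i => hA2.2.1 s i 0) (hA2.2.2.1 s)
    (fun w => w.2.2.2 k) (fun w => w.2.2.1 k) (fun w => w.2.1) (fun w => w.1)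
    ((measurable_pi_apply k).comp (measurable_snd.comp (measurable_snd.comp measurable_snd)))
    ((measurable_pi_apply k).comp (measurable_fst.comp (measurable_snd.comp measurable_snd)))
    (measurable_fst.comp measurable_snd)
    measurable_fst
    (fun i => ⟨(measurable_pi_apply k).comp
        (measurable_snd.comp (measurable_snd.comp (measurable_snd.comp (hWm i)))),
      C, fun ω => ((hC s i ω).2.2 k).2⟩)
    (fun i => ⟨(measurable_pi_apply k).comp
        (measurable_fst.comp (measurable_snd.comp (measurable_snd.comp (hWm i)))),
      C, fun ω => ((hC s i ω).2.2 k).1⟩)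
    (fun i => ⟨measurable_fst.comp (measurable_snd.comp (hWm i)),
      C, fun ω => (hC s i ω).2.1⟩)
    (fun i => ⟨measurable_fst.comp (hWm i), C, fun ω => (hC s i ω).1⟩)

end MultiSite
end

section
/- (Theorem 3.) Suppose FS > 0 and FS_s > 0 for all s. Then the weighted covariance between site-level LATEs and a site-level scalar characteristic X satisfies σ[LATE, X] = (σ²[X]/FS)(β^ITT_X − LATE · β^FS_X), where σ[LATE, X] = Σ_{s=1}^S (w_s FS_s/FS)(LATE_s − LATE)X_s. In particular, the sign of the correlation between the LATEs and X equals the sign of β^ITT_X − LATE · β^FS_X. -/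
open MeasureTheory ProbabilityTheory Filter Finset
open scoped ENNReal NNReal

namespace MultiSite

variable {Ω : Type*} [MeasurableSpace Ω]

/-- Theorem 3: the weighted covariance between site-level LATEs and a
site-level characteristic. -/
theorem statement13 (S : ℕ) (hS : 0 < S)
    (w ITTs FSs X : ℕ → ℝ)
    (hw : ∀ s ∈ Finset.range S, 0 ≤ w s)
    (hwsum : ∑ s ∈ Finset.range S, w s = 1)
    (hFSs : ∀ s ∈ Finset.range S, 0 < FSs s)
    (FS : ℝ) (hFS : FS = ∑ s ∈ Finset.range S, w s * FSs s) (hFSpos : 0 < FS)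
    (ITT : ℝ) (hITT : ITT = ∑ s ∈ Finset.range S, w s * ITTs s)
    (LATEs : ℕ → ℝ) (hLATEs : ∀ s, LATEs s = ITTs s / FSs s)
    (LATE : ℝ) (hLATE : LATE = ITT / FS)
    (muX : ℝ) (hmuX : muX = ∑ s ∈ Finset.range S, w s * X s)
    (s2X : ℝ) (hs2X : s2X = ∑ s ∈ Finset.range S, w s * (X s - muX) ^ 2) (hs2Xpos : 0 < s2X)
    (bITT : ℝ)
    (hbITT : bITT = (∑ s ∈ Finset.range S, w s * ((X s - muX) * (ITTs s - ITT))) / s2X)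
    (bFS : ℝ)
    (hbFS : bFS = (∑ s ∈ Finset.range S, w s * ((X s - muX) * (FSs s - FS))) / s2X) :
    ∑ s ∈ Finset.range S, (w s * FSs s / FS) * ((LATEs s - LATE) * X s)
      = (s2X / FS) * (bITT - LATE * bFS) := by
  have hFSne : FS ≠ 0 := ne_of_gt hFSpos
  have hs2ne : s2X ≠ 0 := ne_of_gt hs2Xpos
  have hLF : LATE * FS = ITT := by rw [hLATE]; field_simp
  have expand : ∀ (Y : ℕ → ℝ) (Yb : ℝ), Yb = ∑ s ∈ Finset.range S, w s * Y s →
      ∑ s ∈ Finset.range S, w s * ((X s - muX) * (Y s - Yb))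
        = (∑ s ∈ Finset.range S, w s * X s * Y s) - muX * Yb := by
    intro Y Yb hYb
    have h1 : ∑ s ∈ Finset.range S, w s * ((X s - muX) * (Y s - Yb))
        = ∑ s ∈ Finset.range S,
          (w s * X s * Y s - muX * (w s * Y s) - Yb * (w s * X s) + (muX * Yb) * w s) := by
      apply Finset.sum_congr rfl; intro s _; ring
    rw [h1]
    simp only [Finset.sum_add_distrib, Finset.sum_sub_distrib, ← Finset.mul_sum,
      ← hYb, ← hmuX, hwsum]
    ring
  have hA := expand ITTs ITT hITT
  have hB := expand FSs FS hFS
  have hL : ∀ s ∈ Finset.range S,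
      (w s * FSs s / FS) * ((LATEs s - LATE) * X s)
        = (w s * X s * ITTs s - LATE * (w s * X s * FSs s)) / FS := by
    intro s hs
    have hne := (hFSs s hs).ne'
    rw [hLATEs]
    field_simp
  rw [Finset.sum_congr rfl hL, ← Finset.sum_div]
  rw [Finset.sum_sub_distrib, ← Finset.mul_sum]
  have hT1 : ∑ s ∈ Finset.range S, w s * X s * ITTs s
      = (∑ s ∈ Finset.range S, w s * ((X s - muX) * (ITTs s - ITT))) + muX * ITT := by
    rw [hA]; ring
  have hT2 : ∑ s ∈ Finset.range S, w s * X s * FSs s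
      = (∑ s ∈ Finset.range S, w s * ((X s - muX) * (FSs s - FS))) + muX * FS := by
    rw [hB]; ring
  rw [hT1, hT2, hbITT, hbFS, ← hLF]
  field_simp
  ring

end MultiSite
end

section
/- (Theorem 4.) Suppose FS > 0, FS_s > 0 for all s, and Assumption 5 holds: Σ_s (w_s FS_s/FS) U_s LATE_s² = 0, and either λ₁ = 0 or Σ_s (w_s FS_s/FS)(LATE_s − LATE)³ = 0. Then the weighted variance of the LATEs satisfies σ²[LATE] = Σ_{s=1}^S w_s (ITT_s − FS_s · LATE)² / FS²bar, where σ²[LATE] = Σ_s (w_s FS_s/FS)(LATE_s − LATE)² and FS²bar = Σ_s w_s FS_s². -/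
open MeasureTheory ProbabilityTheory Filter Finset
open scoped ENNReal NNReal

namespace MultiSite

variable {Ω : Type*} [MeasurableSpace Ω]

/-- Theorem 4: identification of the weighted variance of the LATEs under
Assumption 5. -/
theorem statement14 (S : ℕ) (hS : 0 < S)
    (w ITTs FSs : ℕ → ℝ)
    (hw : ∀ s ∈ Finset.range S, 0 ≤ w s)
    (hwsum : ∑ s ∈ Finset.range S, w s = 1)
    (hFSs : ∀ s ∈ Finset.range S, 0 < FSs s)
    (FS : ℝ) (hFS : FS = ∑ s ∈ Finset.range S, w s * FSs s) (hFSpos : 0 < FS)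
    (ITT : ℝ) (hITT : ITT = ∑ s ∈ Finset.range S, w s * ITTs s)
    (LATEs : ℕ → ℝ) (hLATEs : ∀ s, LATEs s = ITTs s / FSs s)
    (LATE : ℝ) (hLATE : LATE = ITT / FS)
    (FS2bar : ℝ) (hFS2bar : FS2bar = ∑ s ∈ Finset.range S, w s * FSs s ^ 2)
    (s2LATE : ℝ)
    (hs2LATE : s2LATE = ∑ s ∈ Finset.range S, (w s * FSs s / FS) * (LATEs s - LATE) ^ 2)
    (hs2pos : 0 < s2LATE)
    (lam1 : ℝ) (hlam1 : lam1 =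
      (∑ s ∈ Finset.range S, (w s * FSs s / FS) * ((LATEs s - LATE) * FSs s)) / s2LATE)
    (lam0 : ℝ) (hlam0 : lam0 = FS2bar / FS - lam1 * LATE)
    (U : ℕ → ℝ) (hU : ∀ s, U s = FSs s - (lam0 + lam1 * LATEs s))
    (hA5a : ∑ s ∈ Finset.range S, (w s * FSs s / FS) * (U s * LATEs s ^ 2) = 0)
    (hA5b : lam1 = 0 ∨ ∑ s ∈ Finset.range S, (w s * FSs s / FS) * (LATEs s - LATE) ^ 3 = 0) :
    s2LATE = (∑ s ∈ Finset.range S, w s * (ITTs s - FSs s * LATE) ^ 2) / FS2bar := by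
  have hFSne : FS ≠ 0 := ne_of_gt hFSpos
  have hs2ne : s2LATE ≠ 0 := ne_of_gt hs2pos
  -- FS2bar is positive
  have hFS2pos : 0 < FS2bar := by
    rw [hFS2bar]
    obtain ⟨s0, hs0, hws0⟩ : ∃ s ∈ Finset.range S, 0 < w s := by
      by_contra h
      push_neg at h
      have : ∑ s ∈ Finset.range S, w s = 0 := by
        apply Finset.sum_eq_zero
        intro s hs
        exact le_antisymm (h s hs) (hw s hs)
      rw [hwsum] at this; norm_num at this
    refine Finset.sum_pos' (fun s hs => ?_) ⟨s0, hs0, ?_⟩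
    · exact mul_nonneg (hw s hs) (sq_nonneg _)
    · exact mul_pos hws0 (pow_pos (hFSs s0 hs0) 2)
  have hFS2ne : FS2bar ≠ 0 := ne_of_gt hFS2pos
  have hittL : ∀ s ∈ Finset.range S, ITTs s = FSs s * LATEs s := by
    intro s hs
    have h := (hFSs s hs).ne'
    rw [hLATEs]
    field_simp
  have hsum : ∀ F : ℕ → ℝ,
      (∑ s ∈ Finset.range S, (w s * FSs s / FS) * F s)
        = (∑ s ∈ Finset.range S, w s * FSs s * F s) / FS := by
    intro F
    rw [Finset.sum_div]
    exact Finset.sum_congr rfl fun s _ => by ring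
  set a1 := ∑ s ∈ Finset.range S, w s * FSs s * LATEs s with ha1
  set a2 := ∑ s ∈ Finset.range S, w s * FSs s * LATEs s ^ 2 with ha2
  set a3 := ∑ s ∈ Finset.range S, w s * FSs s * LATEs s ^ 3 with ha3
  set b1 := ∑ s ∈ Finset.range S, w s * FSs s ^ 2 * LATEs s with hb1
  set b2 := ∑ s ∈ Finset.range S, w s * FSs s ^ 2 * LATEs s ^ 2 with hb2
  -- first moment
  have h1 : a1 = FS * LATE := by
    have e : a1 = ∑ s ∈ Finset.range S, w s * ITTs s := by
      rw [ha1]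
      exact Finset.sum_congr rfl fun s hs => by rw [hittL s hs]; ring
    rw [e, ← hITT, hLATE]
    field_simp
  -- second moment
  have h2 : s2LATE * FS = a2 - 2 * LATE * a1 + LATE ^ 2 * FS := by
    have e : (∑ s ∈ Finset.range S, w s * FSs s * (LATEs s - LATE) ^ 2)
        = a2 - 2 * LATE * a1 + LATE ^ 2 * FS := by
      simp only [ha2, ha1, hFS, Finset.mul_sum, ← Finset.sum_sub_distrib,
        ← Finset.sum_add_distrib]
      exact Finset.sum_congr rfl fun s _ => by ring
    rw [hs2LATE, hsum, e]
    field_simp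
  -- slope normal equation
  have h3 : lam1 * s2LATE * FS = b1 - LATE * FS2bar := by
    have e : (∑ s ∈ Finset.range S, w s * FSs s * ((LATEs s - LATE) * FSs s))
        = b1 - LATE * FS2bar := by
      simp only [hb1, hFS2bar, Finset.mul_sum, ← Finset.sum_sub_distrib]
      exact Finset.sum_congr rfl fun s _ => by ring
    rw [hlam1, hsum, e]
    field_simp
  -- Assumption 5a
  have h4 : b2 - lam0 * a2 - lam1 * a3 = 0 := by
    have e : (∑ s ∈ Finset.range S, w s * FSs s * (U s * LATEs s ^ 2))
        = b2 - lam0 * a2 - lam1 * a3 := by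
      simp only [hb2, ha2, ha3, Finset.mul_sum, ← Finset.sum_sub_distrib]
      exact Finset.sum_congr rfl fun s _ => by rw [hU s]; ring
    rw [hsum] at hA5a
    rw [← e]
    have := hA5a
    field_simp at this
    rw [mul_zero] at this
    rw [← this]
    exact Finset.sum_congr rfl fun s _ => by ring
  -- intercept relation
  have h5 : lam0 * FS = FS2bar - lam1 * LATE * FS := by
    rw [hlam0]
    field_simp
  -- target sum expansion
  have htgt : (∑ s ∈ Finset.range S, w s * (ITTs s - FSs s * LATE) ^ 2)
      = b2 - 2 * LATE * b1 + LATE ^ 2 * FS2bar := by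
    have e1 : (∑ s ∈ Finset.range S, w s * (ITTs s - FSs s * LATE) ^ 2)
        = ∑ s ∈ Finset.range S, (w s * FSs s ^ 2 * LATEs s ^ 2
            - 2 * LATE * (w s * FSs s ^ 2 * LATEs s) + LATE ^ 2 * (w s * FSs s ^ 2)) := by
      exact Finset.sum_congr rfl fun s hs => by rw [hittL s hs]; ring
    rw [e1]
    simp only [hb2, hb1, hFS2bar, Finset.mul_sum, ← Finset.sum_sub_distrib,
      ← Finset.sum_add_distrib]
  rw [htgt, eq_div_iff hFS2ne]
  rcases hA5b with hl | hl
  · subst hl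
    linear_combination (-1)*h4 + lam0*h2 + (-2*LATE*lam0)*h1
      + (-(s2LATE+LATE^2))*h5 + (-2*LATE)*h3
  · -- third central moment vanishes
    have h6 : a3 - 3 * LATE * a2 + 3 * LATE ^ 2 * a1 - LATE ^ 3 * FS = 0 := by
      have e : (∑ s ∈ Finset.range S, w s * FSs s * (LATEs s - LATE) ^ 3)
          = a3 - 3 * LATE * a2 + 3 * LATE ^ 2 * a1 - LATE ^ 3 * FS := by
        simp only [ha3, ha2, ha1, hFS, Finset.mul_sum, ← Finset.sum_sub_distrib,
          ← Finset.sum_add_distrib]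
        exact Finset.sum_congr rfl fun s _ => by ring
      rw [hsum] at hl
      rw [← e]
      field_simp at hl
      rwa [mul_zero] at hl
    linear_combination (-1)*h4 + (-lam1)*h6 + (lam0+3*LATE*lam1)*h2
      + (-(2*LATE*lam0+3*LATE^2*lam1))*h1 + (-(s2LATE+LATE^2))*h5 + (-2*LATE)*h3

end MultiSite
end

section
/- If the least-squares residuals satisfy the orthogonality condition Σ_s (w_s FS_s/FS) U_s LATE_s² = 0 (in addition to the automatic conditions Σ_s (w_s FS_s/FS)U_s = Σ_s (w_s FS_s/FS)U_s LATE_s = 0), then Σ_{s=1}^S w_s (ITT_s − FS_s · LATE)² = Σ_{s=1}^S w_s FS_s (λ₀ + λ₁ LATE_s)(LATE_s − LATE)². -/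
open MeasureTheory ProbabilityTheory Filter Finset
open scoped ENNReal NNReal

namespace MultiSite

variable {Ω : Type*} [MeasurableSpace Ω]

/-- a key step in the proof of Theorem 4, valid under the residual
orthogonality conditions. -/
theorem statement15 (S : ℕ) (hS : 0 < S)
    (w ITTs FSs : ℕ → ℝ)
    (hw : ∀ s ∈ Finset.range S, 0 ≤ w s)
    (hwsum : ∑ s ∈ Finset.range S, w s = 1)
    (hFSs : ∀ s ∈ Finset.range S, 0 < FSs s)
    (FS : ℝ) (hFS : FS = ∑ s ∈ Finset.range S, w s * FSs s) (hFSpos : 0 < FS)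
    (ITT : ℝ) (hITT : ITT = ∑ s ∈ Finset.range S, w s * ITTs s)
    (LATEs : ℕ → ℝ) (hLATEs : ∀ s, LATEs s = ITTs s / FSs s)
    (LATE : ℝ) (hLATE : LATE = ITT / FS)
    (lam0 lam1 : ℝ)
    (U : ℕ → ℝ) (hU : ∀ s, U s = FSs s - (lam0 + lam1 * LATEs s))
    (horth0 : ∑ s ∈ Finset.range S, (w s * FSs s / FS) * U s = 0)
    (horth1 : ∑ s ∈ Finset.range S, (w s * FSs s / FS) * (U s * LATEs s) = 0)
    (horth2 : ∑ s ∈ Finset.range S, (w s * FSs s / FS) * (U s * LATEs s ^ 2) = 0) :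
    ∑ s ∈ Finset.range S, w s * (ITTs s - FSs s * LATE) ^ 2
      = ∑ s ∈ Finset.range S, w s * FSs s * ((lam0 + lam1 * LATEs s) * (LATEs s - LATE) ^ 2) := by
  have hFS0 : FS ≠ 0 := ne_of_gt hFSpos
  have key : ∑ s ∈ Finset.range S, w s * FSs s * (U s * (LATEs s - LATE) ^ 2) = 0 := by
    calc ∑ s ∈ Finset.range S, w s * FSs s * (U s * (LATEs s - LATE) ^ 2)
        = ∑ s ∈ Finset.range S,
            (FS * ((w s * FSs s / FS) * (U s * LATEs s ^ 2))
              - 2 * LATE * (FS * ((w s * FSs s / FS) * (U s * LATEs s)))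
              + LATE ^ 2 * (FS * ((w s * FSs s / FS) * U s))) := by
          refine Finset.sum_congr rfl fun s _ => ?_
          field_simp
          ring
      _ = 0 := by
          simp only [Finset.sum_add_distrib, Finset.sum_sub_distrib, ← Finset.mul_sum,
            horth0, horth1, horth2]
          ring
  have hstep : ∑ s ∈ Finset.range S, w s * (ITTs s - FSs s * LATE) ^ 2
      = ∑ s ∈ Finset.range S,
          (w s * FSs s * ((lam0 + lam1 * LATEs s) * (LATEs s - LATE) ^ 2)
            + w s * FSs s * (U s * (LATEs s - LATE) ^ 2)) := by
    refine Finset.sum_congr rfl fun s hs => ?_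
    have hfs : FSs s ≠ 0 := ne_of_gt (hFSs s hs)
    have hITTeq : ITTs s = FSs s * LATEs s := by
      rw [hLATEs s]; field_simp
    have hUeq : FSs s = (lam0 + lam1 * LATEs s) + U s := by
      rw [hU s]; ring
    rw [hITTeq]
    linear_combination (w s * FSs s * (LATEs s - LATE) ^ 2) * hUeq
  rw [hstep, Finset.sum_add_distrib, key, add_zero]

end MultiSite
end
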